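/- arXiv:1402.5884 — 11 statements merged into one kernel-verified Lean document; each statement's English description precedes it below -/
import Mathlib

section
/- Along Algorithm A1, for every k one has f(x^{k+1}) ≤ f(x^k) − δ(α_k/β_k)‖x^k − P_C(z^k)‖²; in particular the sequence (f(x^k))_{k∈ℕ} is nonincreasing. -/
open Filter
open scoped RealInnerProductSpace

theorem stmt_1
    {H : Type*} [NormedAddCommGroup H] [InnerProductSpace ℝ H] [CompleteSpace H]
    (C : Set H) (hCne : C.Nonempty) (hCcl : IsClosed C) (hCcv : Convex ℝ C)
    (f : H → ℝ) (hf : ConvexOn ℝ Set.univ f)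
    (gradf : H → H)
    (hgrad : ∀ x d : H,
      Tendsto (fun t : ℝ => (f (x + t • d) - f x) / t) (nhdsWithin 0 (Set.Ioi 0))
        (nhds ⟪gradf x, d⟫))
    (PC : H → H)
    (hPC : ∀ x : H, PC x ∈ C ∧ ∀ z ∈ C, ⟪x - PC x, z - PC x⟫ ≤ 0)
    (θ δ βlo βhi : ℝ)
    (hθ : θ ∈ Set.Ioo (0:ℝ) 1) (hδ : δ ∈ Set.Ioo (0:ℝ) 1)
    (hβlo : 0 < βlo) (hββ : βlo ≤ βhi)
    (β : ℕ → ℝ) (hβk : ∀ k, β k ∈ Set.Icc βlo βhi)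
    (x z : ℕ → H) (α : ℕ → ℝ) (j : ℕ → ℕ)
    (hx0 : x 0 ∈ C)
    (hz : ∀ k, z k = x k - β k • gradf (x k))
    (hjA : ∀ k, f ((θ ^ j k) • PC (z k) + (1 - θ ^ j k) • x k)
        ≤ f (x k) - δ * θ ^ j k * ⟪gradf (x k), x k - PC (z k)⟫)
    (hjmin : ∀ k, ∀ i < j k, ¬ (f ((θ ^ i) • PC (z k) + (1 - θ ^ i) • x k)
        ≤ f (x k) - δ * θ ^ i * ⟪gradf (x k), x k - PC (z k)⟫))
    (hα : ∀ k, α k = θ ^ j k)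
    (hstep : ∀ k, x (k+1) = α k • PC (z k) + (1 - α k) • x k)
    : (∀ k, f (x (k+1)) ≤ f (x k) - δ * (α k / β k) * ‖x k - PC (z k)‖ ^ 2) ∧
      Antitone (fun k => f (x k)) := by

  obtain ⟨hθ0, hθ1⟩ := hθ
  obtain ⟨hδ0, hδ1⟩ := hδ
  -- membership in C
  have hxC : ∀ k, x k ∈ C := by
    intro k
    induction k with
    | zero => exact hx0
    | succ n ih =>
      rw [hstep n]
      have hα0 : 0 ≤ α n := by rw [hα n]; positivity
      have hα1 : α n ≤ 1 := by
        rw [hα n]; exact pow_le_one₀ hθ0.le hθ1.le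
      exact hCcv ((hPC (z n)).1) ih hα0 (by linarith) (by ring)
  have key : ∀ k, f (x (k+1)) ≤ f (x k) - δ * (α k / β k) * ‖x k - PC (z k)‖ ^ 2 := by
    intro k
    have hβpos : 0 < β k := lt_of_lt_of_le hβlo (hβk k).1
    have hproj := (hPC (z k)).2 (x k) (hxC k)
    have hzk : z k - PC (z k) = (x k - PC (z k)) - β k • gradf (x k) := by
      rw [hz k]; abel
    rw [hzk, inner_sub_left, inner_smul_left, RCLike.conj_to_real,
      real_inner_self_eq_norm_sq] at hproj
    -- ‖x k - PC (z k)‖^2 ≤ β k * ⟪gradf (x k), x k - PC (z k)⟫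
    have hinner : ‖x k - PC (z k)‖ ^ 2 / β k ≤ ⟪gradf (x k), x k - PC (z k)⟫ := by
      rw [div_le_iff₀ hβpos]
      nlinarith [real_inner_comm (gradf (x k)) (x k - PC (z k))]
    have hαpos : 0 < α k := by rw [hα k]; positivity
    have hA := hjA k
    rw [← hα k] at hA
    have h1 : δ * (α k / β k) * ‖x k - PC (z k)‖ ^ 2
        ≤ δ * α k * ⟪gradf (x k), x k - PC (z k)⟫ := by
      have := mul_le_mul_of_nonneg_left hinner (by positivity : (0:ℝ) ≤ δ * α k)
      calc δ * (α k / β k) * ‖x k - PC (z k)‖ ^ 2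
          = δ * α k * (‖x k - PC (z k)‖ ^ 2 / β k) := by ring
        _ ≤ δ * α k * ⟪gradf (x k), x k - PC (z k)⟫ := this
    have hxk1 : x (k+1) = α k • PC (z k) + (1 - α k) • x k := hstep k
    rw [hxk1]
    linarith
  refine ⟨key, antitone_nat_of_succ_le fun k => ?_⟩
  have hβpos : 0 < β k := lt_of_lt_of_le hβlo (hβk k).1
  have hαpos : 0 < α k := by rw [hα k]; positivity
  have hnn : 0 ≤ δ * (α k / β k) * ‖x k - PC (z k)‖ ^ 2 := by positivity
  have := key k
  simpa using by linarith
end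

section
/- Assume S_* ≠ ∅. Then along Algorithm A1 one has lim_{k→∞} α_k ‖x^k − P_C(z^k)‖² = 0. -/
open Filter
open scoped RealInnerProductSpace

theorem stmt_2
    {H : Type*} [NormedAddCommGroup H] [InnerProductSpace ℝ H] [CompleteSpace H]
    (C : Set H) (hCne : C.Nonempty) (hCcl : IsClosed C) (hCcv : Convex ℝ C)
    (f : H → ℝ) (hf : ConvexOn ℝ Set.univ f)
    (gradf : H → H)
    (hgrad : ∀ x d : H,
      Tendsto (fun t : ℝ => (f (x + t • d) - f x) / t) (nhdsWithin 0 (Set.Ioi 0))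
        (nhds ⟪gradf x, d⟫))
    (PC : H → H)
    (hPC : ∀ x : H, PC x ∈ C ∧ ∀ z ∈ C, ⟪x - PC x, z - PC x⟫ ≤ 0)
    (θ δ βlo βhi : ℝ)
    (hθ : θ ∈ Set.Ioo (0:ℝ) 1) (hδ : δ ∈ Set.Ioo (0:ℝ) 1)
    (hβlo : 0 < βlo) (hββ : βlo ≤ βhi)
    (β : ℕ → ℝ) (hβk : ∀ k, β k ∈ Set.Icc βlo βhi)
    (x z : ℕ → H) (α : ℕ → ℝ) (j : ℕ → ℕ)
    (hx0 : x 0 ∈ C)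
    (hz : ∀ k, z k = x k - β k • gradf (x k))
    (hjA : ∀ k, f ((θ ^ j k) • PC (z k) + (1 - θ ^ j k) • x k)
        ≤ f (x k) - δ * θ ^ j k * ⟪gradf (x k), x k - PC (z k)⟫)
    (hjmin : ∀ k, ∀ i < j k, ¬ (f ((θ ^ i) • PC (z k) + (1 - θ ^ i) • x k)
        ≤ f (x k) - δ * θ ^ i * ⟪gradf (x k), x k - PC (z k)⟫))
    (hα : ∀ k, α k = θ ^ j k)
    (hstep : ∀ k, x (k+1) = α k • PC (z k) + (1 - α k) • x k)
    (hS : ∃ xs ∈ C, ∀ y ∈ C, f xs ≤ f y)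
    : Tendsto (fun k => α k * ‖x k - PC (z k)‖ ^ 2) atTop (nhds 0) := by

  obtain ⟨xs, hxsC, hxsmin⟩ := hS
  obtain ⟨hθ0, hθ1⟩ := hθ
  obtain ⟨hδ0, hδ1⟩ := hδ
  have hβhi : 0 < βhi := lt_of_lt_of_le hβlo hββ
  -- α k ∈ (0,1]
  have hα0 : ∀ k, 0 < α k := fun k => by rw [hα k]; positivity
  have hα1 : ∀ k, α k ≤ 1 := fun k => by
    rw [hα k]; exact pow_le_one₀ hθ0.le hθ1.le
  -- x k ∈ C
  have hxC : ∀ k, x k ∈ C := by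
    intro k
    induction k with
    | zero => exact hx0
    | succ n ih =>
      rw [hstep n]
      exact hCcv (hPC (z n)).1 ih (hα0 n).le (by linarith [hα1 n]) (by ring)
  -- key inequality : ‖x k - PC (z k)‖^2 ≤ β k * ⟪gradf (x k), x k - PC (z k)⟫
  have key : ∀ k, ‖x k - PC (z k)‖ ^ 2 ≤ β k * ⟪gradf (x k), x k - PC (z k)⟫ := by
    intro k
    rw [hz k]
    have h := (hPC (z k)).2 (x k) (hxC k)
    rw [hz k] at h
    have heq : (x k - β k • gradf (x k)) - PC (z k)
        = (x k - PC (z k)) - β k • gradf (x k) := by abel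
    rw [hz k] at heq
    rw [heq, inner_sub_left, real_inner_smul_left,
      real_inner_self_eq_norm_sq] at h
    linarith
  set a : ℕ → ℝ := fun k => α k * ‖x k - PC (z k)‖ ^ 2 with ha
  have ha0 : ∀ k, 0 ≤ a k := fun k => by
    have := (hα0 k).le; positivity
  set c : ℝ := δ / βhi with hc
  have hc0 : 0 < c := div_pos hδ0 hβhi
  -- descent
  have descent : ∀ k, f (x (k+1)) + c * a k ≤ f (x k) := by
    intro k
    have h1 := hjA k
    rw [← hα k, ← hstep k] at h1
    have hβk1 := (hβk k).1
    have hβk2 := (hβk k).2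
    have hβkpos : 0 < β k := lt_of_lt_of_le hβlo hβk1
    have hip : ‖x k - PC (z k)‖ ^ 2 / β k ≤ ⟪gradf (x k), x k - PC (z k)⟫ :=
      (div_le_iff₀' hβkpos).2 (key k)
    have hnn : 0 ≤ ‖x k - PC (z k)‖ ^ 2 := by positivity
    have h2 : c * ‖x k - PC (z k)‖ ^ 2 ≤ δ * ⟪gradf (x k), x k - PC (z k)⟫ := by
      have h3 : ‖x k - PC (z k)‖ ^ 2 / βhi ≤ ‖x k - PC (z k)‖ ^ 2 / β k :=
        div_le_div_of_nonneg_left hnn hβkpos hβk2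
      calc c * ‖x k - PC (z k)‖ ^ 2 = δ * (‖x k - PC (z k)‖ ^ 2 / βhi) := by
            rw [hc]; ring
        _ ≤ δ * ⟪gradf (x k), x k - PC (z k)⟫ :=
            mul_le_mul_of_nonneg_left (h3.trans hip) hδ0.le
    have h4 : c * a k ≤ δ * α k * ⟪gradf (x k), x k - PC (z k)⟫ := by
      have := mul_le_mul_of_nonneg_left h2 (hα0 k).le
      calc c * a k = α k * (c * ‖x k - PC (z k)‖ ^ 2) := by rw [ha]; ring
        _ ≤ α k * (δ * ⟪gradf (x k), x k - PC (z k)⟫) := this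
        _ = δ * α k * ⟪gradf (x k), x k - PC (z k)⟫ := by ring
    have h5 : δ * α k * ⟪gradf (x k), x k - PC (z k)⟫
        = δ * θ ^ j k * ⟪gradf (x k), x k - PC (z k)⟫ := by rw [hα k]
    linarith [h5 ▸ h4]
  -- f (x k) is antitone and bounded below
  have hanti : Antitone (fun k => f (x k)) := by
    apply antitone_nat_of_succ_le
    intro k
    have := descent k
    have := mul_nonneg hc0.le (ha0 k)
    linarith
  have hbdd : BddBelow (Set.range (fun k => f (x k))) := by
    refine ⟨f xs, ?_⟩
    rintro y ⟨k, rfl⟩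
    exact hxsmin (x k) (hxC k)
  have hconv : Tendsto (fun k => f (x k)) atTop (nhds (⨅ k, f (x k))) :=
    tendsto_atTop_ciInf hanti hbdd
  have hconv' : Tendsto (fun k => f (x (k+1))) atTop (nhds (⨅ k, f (x k))) :=
    hconv.comp (tendsto_add_atTop_nat 1)
  have hdiff : Tendsto (fun k => f (x k) - f (x (k+1))) atTop (nhds 0) := by
    have := hconv.sub hconv'
    simpa using this
  have hsq : Tendsto (fun k => c * a k) atTop (nhds 0) := by
    apply squeeze_zero (fun k => mul_nonneg hc0.le (ha0 k))
      (fun k => by linarith [descent k]) hdiff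
  have : Tendsto (fun k => c⁻¹ * (c * a k)) atTop (nhds (c⁻¹ * 0)) :=
    hsq.const_mul _
  simpa [hc0.ne', mul_assoc, ← mul_assoc, inv_mul_cancel₀ hc0.ne'] using this
end

section
/- (Well-definedness of the Armijo inner loop.) Let x ∈ C, β > 0, θ, δ ∈ (0,1), and set w = P_C(x − β∇f(x)). If x is not a minimizer of f over C (equivalently, x ≠ w), then there exists j ∈ ℕ such that f(θ^j w + (1 − θ^j) x) ≤ f(x) − δ θ^j ⟨∇f(x), x − w⟩. -/
open Filter
open scoped RealInnerProductSpace

theorem stmt_3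
    {H : Type*} [NormedAddCommGroup H] [InnerProductSpace ℝ H] [CompleteSpace H]
    (C : Set H) (hCne : C.Nonempty) (hCcl : IsClosed C) (hCcv : Convex ℝ C)
    (f : H → ℝ) (hf : ConvexOn ℝ Set.univ f)
    (gradf : H → H)
    (hgrad : ∀ x d : H,
      Tendsto (fun t : ℝ => (f (x + t • d) - f x) / t) (nhdsWithin 0 (Set.Ioi 0))
        (nhds ⟪gradf x, d⟫))
    (PC : H → H)
    (hPC : ∀ x : H, PC x ∈ C ∧ ∀ z ∈ C, ⟪x - PC x, z - PC x⟫ ≤ 0)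
    (x₀ : H) (hx₀ : x₀ ∈ C) (b θ δ : ℝ) (hb : 0 < b)
    (hθ : θ ∈ Set.Ioo (0:ℝ) 1) (hδ : δ ∈ Set.Ioo (0:ℝ) 1)
    (hxnot : ¬ ∀ y ∈ C, f x₀ ≤ f y)
    : ∃ j : ℕ, f ((θ ^ j) • PC (x₀ - b • gradf x₀) + (1 - θ ^ j) • x₀)
      ≤ f x₀ - δ * θ ^ j * ⟪gradf x₀, x₀ - PC (x₀ - b • gradf x₀)⟫ := by
  set w := PC (x₀ - b • gradf x₀) with hw
  set g : ℝ := ⟪gradf x₀, x₀ - w⟫ with hg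
  obtain ⟨hwC, hproj⟩ := hPC (x₀ - b • gradf x₀)
  -- gradient inequality from convexity
  have gradineq : ∀ z : H, ⟪gradf x₀, z - x₀⟫ ≤ f z - f x₀ := by
    intro z
    refine le_of_tendsto (hgrad x₀ (z - x₀)) ?_
    have hmem : Set.Ioc (0:ℝ) 1 ∈ nhdsWithin (0:ℝ) (Set.Ioi 0) := by
      rw [mem_nhdsGT_iff_exists_Ioc_subset]
      exact ⟨1, by norm_num, le_refl _⟩
    filter_upwards [hmem] with t ht
    have ht0 : 0 < t := ht.1
    have hconv : f ((1 - t) • x₀ + t • z) ≤ (1 - t) * f x₀ + t * f z :=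
      hf.2 (Set.mem_univ x₀) (Set.mem_univ z) (by linarith [ht.2]) (le_of_lt ht0)
        (by ring)
    have heq : x₀ + t • (z - x₀) = (1 - t) • x₀ + t • z := by module
    rw [heq, div_le_iff₀ ht0]
    nlinarith [hconv]
  -- x₀ ≠ w
  have hne : x₀ ≠ w := by
    intro h
    apply hxnot
    intro y hy
    have h1 := hproj y hy
    rw [← hw, ← h] at h1
    have h2 : ⟪x₀ - b • gradf x₀ - x₀, y - x₀⟫ = -(b * ⟪gradf x₀, y - x₀⟫) := by
      have : x₀ - b • gradf x₀ - x₀ = -(b • gradf x₀) := by abel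
      rw [this, inner_neg_left, real_inner_smul_left]
    rw [h2] at h1
    have h3 : 0 ≤ ⟪gradf x₀, y - x₀⟫ := by nlinarith [h1]
    linarith [gradineq y]
  -- g > 0
  have key : ‖x₀ - w‖ ^ 2 ≤ b * g := by
    have h1 := hproj x₀ hx₀
    have h2 : ⟪x₀ - b • gradf x₀ - w, x₀ - w⟫
        = ⟪x₀ - w, x₀ - w⟫ - b * ⟪gradf x₀, x₀ - w⟫ := by
      have : x₀ - b • gradf x₀ - w = (x₀ - w) - b • gradf x₀ := by abel
      rw [this, inner_sub_left, real_inner_smul_left]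
    rw [← hw, h2] at h1
    rw [hg, ← real_inner_self_eq_norm_sq]
    linarith
  have hg0 : 0 < g := by
    have hn : 0 < ‖x₀ - w‖ ^ 2 := by
      have h0 : 0 < ‖x₀ - w‖ := norm_pos_iff.mpr (sub_ne_zero.mpr hne)
      positivity
    nlinarith
  -- limit
  have hlim : Tendsto (fun t : ℝ => (f (x₀ + t • (w - x₀)) - f x₀) / t)
      (nhdsWithin 0 (Set.Ioi 0)) (nhds (-g)) := by
    have := hgrad x₀ (w - x₀)
    have heq : ⟪gradf x₀, w - x₀⟫ = -g := by
      rw [hg, ← inner_neg_right, neg_sub]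
    rwa [heq] at this
  have hlt : -g < -(δ * g) := by nlinarith [hδ.1, hδ.2]
  have hev : ∀ᶠ t in nhdsWithin (0:ℝ) (Set.Ioi 0),
      (f (x₀ + t • (w - x₀)) - f x₀) / t < -(δ * g) :=
    hlim.eventually (Filter.Tendsto.eventually_lt_const hlt tendsto_id) |>.mono (fun t ht => ht)
  have hpow : Tendsto (fun n : ℕ => θ ^ n) atTop (nhdsWithin 0 (Set.Ioi 0)) := by
    apply tendsto_nhdsWithin_of_tendsto_nhds_of_eventually_within
    · exact tendsto_pow_atTop_nhds_zero_of_lt_one (le_of_lt hθ.1) hθ.2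
    · exact Eventually.of_forall fun n => pow_pos hθ.1 n
  obtain ⟨j, hj⟩ := (hpow.eventually hev).exists
  refine ⟨j, ?_⟩
  have htj : 0 < θ ^ j := pow_pos hθ.1 j
  rw [div_lt_iff₀ htj] at hj
  have heq2 : x₀ + (θ ^ j) • (w - x₀) = (θ ^ j) • w + (1 - θ ^ j) • x₀ := by module
  rw [heq2] at hj
  nlinarith [hj]
end

section
/- Along Algorithm A1, for every x_* ∈ S_* and every k, ‖x^{k+1} − x_*‖² ≤ ‖x^k − x_*‖² − α_k ‖x^k − P_C(z^k)‖² + (2β̂/δ)(f(x^k) − f(x^{k+1})). -/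
open Filter
open scoped RealInnerProductSpace

lemma grad_ineq_aux {H : Type*} [NormedAddCommGroup H] [InnerProductSpace ℝ H]
    (f : H → ℝ) (hf : ConvexOn ℝ Set.univ f) (gradf : H → H)
    (hgrad : ∀ x d : H,
      Tendsto (fun t : ℝ => (f (x + t • d) - f x) / t) (nhdsWithin 0 (Set.Ioi 0))
        (nhds ⟪gradf x, d⟫)) (x y : H) : ⟪gradf x, y - x⟫ ≤ f y - f x := by
  refine le_of_tendsto (hgrad x (y - x)) ?_
  filter_upwards [Ioo_mem_nhdsGT_of_mem (Set.left_mem_Ico.2 one_pos)] with t ht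
  have h1 : x + t • (y - x) = (1 - t) • x + t • y := by
    rw [sub_smul, one_smul, smul_sub]; abel
  have hcv := hf.2 (Set.mem_univ x) (Set.mem_univ y)
    (by linarith [ht.2] : (0:ℝ) ≤ 1 - t) ht.1.le (by ring)
  rw [h1, div_le_iff₀ ht.1]
  simp only [smul_eq_mul] at hcv
  nlinarith [hcv]

theorem stmt_4
    {H : Type*} [NormedAddCommGroup H] [InnerProductSpace ℝ H] [CompleteSpace H]
    (C : Set H) (hCne : C.Nonempty) (hCcl : IsClosed C) (hCcv : Convex ℝ C)
    (f : H → ℝ) (hf : ConvexOn ℝ Set.univ f)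
    (gradf : H → H)
    (hgrad : ∀ x d : H,
      Tendsto (fun t : ℝ => (f (x + t • d) - f x) / t) (nhdsWithin 0 (Set.Ioi 0))
        (nhds ⟪gradf x, d⟫))
    (PC : H → H)
    (hPC : ∀ x : H, PC x ∈ C ∧ ∀ z ∈ C, ⟪x - PC x, z - PC x⟫ ≤ 0)
    (θ δ βlo βhi : ℝ)
    (hθ : θ ∈ Set.Ioo (0:ℝ) 1) (hδ : δ ∈ Set.Ioo (0:ℝ) 1)
    (hβlo : 0 < βlo) (hββ : βlo ≤ βhi)
    (β : ℕ → ℝ) (hβk : ∀ k, β k ∈ Set.Icc βlo βhi)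
    (x z : ℕ → H) (α : ℕ → ℝ) (j : ℕ → ℕ)
    (hx0 : x 0 ∈ C)
    (hz : ∀ k, z k = x k - β k • gradf (x k))
    (hjA : ∀ k, f ((θ ^ j k) • PC (z k) + (1 - θ ^ j k) • x k)
        ≤ f (x k) - δ * θ ^ j k * ⟪gradf (x k), x k - PC (z k)⟫)
    (hjmin : ∀ k, ∀ i < j k, ¬ (f ((θ ^ i) • PC (z k) + (1 - θ ^ i) • x k)
        ≤ f (x k) - δ * θ ^ i * ⟪gradf (x k), x k - PC (z k)⟫))
    (hα : ∀ k, α k = θ ^ j k)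
    (hstep : ∀ k, x (k+1) = α k • PC (z k) + (1 - α k) • x k)
    : ∀ xs : H, xs ∈ C → (∀ y ∈ C, f xs ≤ f y) → ∀ k,
      ‖x (k+1) - xs‖ ^ 2 ≤ ‖x k - xs‖ ^ 2 - α k * ‖x k - PC (z k)‖ ^ 2
        + (2 * βhi / δ) * (f (x k) - f (x (k+1))) := by
  intro xs hxsC hxsmin k
  have hδ0 : (0:ℝ) < δ := hδ.1
  have hα0 : ∀ m, 0 < α m := fun m => (hα m) ▸ pow_pos hθ.1 _
  have hα1 : ∀ m, α m ≤ 1 := fun m => (hα m) ▸ pow_le_one₀ hθ.1.le hθ.2.le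
  have hxC : ∀ m, x m ∈ C := by
    intro m
    induction m with
    | zero => exact hx0
    | succ n ih =>
      rw [hstep n]
      exact hCcv (hPC (z n)).1 ih (hα0 n).le (by linarith [hα1 n]) (by ring)
  have ha0 : (0:ℝ) ≤ α k := (hα0 k).le
  have ha1 : α k ≤ 1 := hα1 k
  have hb0 : (0:ℝ) < β k := lt_of_lt_of_le hβlo (hβk k).1
  have hbhi : β k ≤ βhi := (hβk k).2
  -- projection inequality, generic form
  have hproj : ∀ w ∈ C,
      (⟪x k - PC (z k), w - PC (z k)⟫ : ℝ) - β k * ⟪gradf (x k), w - PC (z k)⟫ ≤ 0 := by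
    intro w hw
    have h : (⟪(x k - PC (z k)) - β k • gradf (x k), w - PC (z k)⟫ : ℝ) ≤ 0 := by
      have h0 := (hPC (z k)).2 w hw
      have hrw : z k - PC (z k) = (x k - PC (z k)) - β k • gradf (x k) := by
        rw [hz k]; abel
      rwa [hrw] at h0
    rw [inner_sub_left, real_inner_smul_left] at h
    linarith
  have h1 : ‖x k - PC (z k)‖ ^ 2 ≤ β k * ⟪gradf (x k), x k - PC (z k)⟫ := by
    have h := hproj (x k) (hxC k)
    rw [real_inner_self_eq_norm_sq] at h
    linarith
  have h2 : (⟪x k - PC (z k), xs - PC (z k)⟫ : ℝ)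
      ≤ β k * ⟪gradf (x k), xs - PC (z k)⟫ := by linarith [hproj xs hxsC]
  have h3 : (⟪gradf (x k), xs - x k⟫ : ℝ) ≤ 0 := by
    have hgi := grad_ineq_aux f hf gradf hgrad (x k) xs
    linarith [hxsmin (x k) (hxC k)]
  have h4 : δ * (α k * ⟪gradf (x k), x k - PC (z k)⟫) ≤ f (x k) - f (x (k+1)) := by
    have hjak := hjA k
    rw [← hα k, ← hstep k] at hjak
    linarith
  have h5 : (⟪gradf (x k), xs - PC (z k)⟫ : ℝ)
      = ⟪gradf (x k), xs - x k⟫ + ⟪gradf (x k), x k - PC (z k)⟫ := by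
    rw [← inner_add_right]; congr 1; abel
  have hN0 : (0:ℝ) ≤ ‖x k - PC (z k)‖ ^ 2 := by positivity
  have hI0 : (0:ℝ) ≤ ⟪gradf (x k), x k - PC (z k)⟫ := by nlinarith
  -- expansion
  have hxdiff : x (k+1) - xs = (x k - xs) + α k • (PC (z k) - x k) := by
    rw [hstep k, sub_smul, one_smul, smul_sub]
    abel
  have hiuv : (⟪x k - xs, PC (z k) - x k⟫ : ℝ)
      = ⟪x k - PC (z k), xs - PC (z k)⟫ - ‖x k - PC (z k)‖ ^ 2 := by
    rw [← real_inner_self_eq_norm_sq, ← inner_sub_right]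
    have e1 : xs - PC (z k) - (x k - PC (z k)) = xs - x k := by abel
    rw [e1, show x k - xs = -(xs - x k) by abel,
      show PC (z k) - x k = -(x k - PC (z k)) by abel, inner_neg_neg]
    exact real_inner_comm _ _
  have hexp : ‖x (k+1) - xs‖ ^ 2 = ‖x k - xs‖ ^ 2
      + 2 * α k * (⟪x k - PC (z k), xs - PC (z k)⟫ - ‖x k - PC (z k)‖ ^ 2)
      + α k ^ 2 * ‖x k - PC (z k)‖ ^ 2 := by
    rw [hxdiff, @norm_add_sq_real, real_inner_smul_right, hiuv, norm_smul]
    rw [mul_pow, norm_sub_rev (PC (z k)), Real.norm_eq_abs, sq_abs]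
    ring
  rw [hexp]
  -- final scalar combination
  have haI0 : (0:ℝ) ≤ α k * ⟪gradf (x k), x k - PC (z k)⟫ := mul_nonneg ha0 hI0
  have hfin : 2 * βhi * (α k * ⟪gradf (x k), x k - PC (z k)⟫)
      ≤ 2 * βhi / δ * (f (x k) - f (x (k+1))) := by
    rw [div_mul_eq_mul_div, le_div_iff₀ hδ0]
    nlinarith
  have habK : α k * (β k * ⟪gradf (x k), xs - x k⟫) ≤ 0 :=
    mul_nonpos_of_nonneg_of_nonpos ha0
      (mul_nonpos_of_nonneg_of_nonpos hb0.le h3)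
  have hPa : α k * ⟪x k - PC (z k), xs - PC (z k)⟫
      ≤ α k * (β k * ⟪gradf (x k), x k - PC (z k)⟫) := by
    have hstep1 : α k * ⟪x k - PC (z k), xs - PC (z k)⟫
        ≤ α k * (β k * ⟪gradf (x k), xs - PC (z k)⟫) :=
      mul_le_mul_of_nonneg_left h2 ha0
    have hstep2 : α k * (β k * ⟪gradf (x k), xs - PC (z k)⟫)
        = α k * (β k * ⟪gradf (x k), xs - x k⟫)
          + α k * (β k * ⟪gradf (x k), x k - PC (z k)⟫) := by
      rw [h5]; ring
    linarith
  have hbI : α k * (β k * ⟪gradf (x k), x k - PC (z k)⟫)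
      ≤ βhi * (α k * ⟪gradf (x k), x k - PC (z k)⟫) := by
    nlinarith [mul_le_mul_of_nonneg_right hbhi haI0]
  have haa : α k ^ 2 ≤ α k := by nlinarith [mul_nonneg ha0 (sub_nonneg.2 ha1)]
  have hsq : α k ^ 2 * ‖x k - PC (z k)‖ ^ 2 ≤ α k * ‖x k - PC (z k)‖ ^ 2 :=
    mul_le_mul_of_nonneg_right haa hN0
  linarith [hPa, hbI, hfin, hsq]
end

section
/- Assume S_* ≠ ∅. Then the sequence (x^k)_{k∈ℕ} generated by Algorithm A1 is quasi-Fejér convergent to S_*: there exists a nonnegative sequence (ε_k)_{k∈ℕ} with Σ_{k=0}^∞ ε_k < ∞ such that ‖x^{k+1} − x_*‖² ≤ ‖x^k − x_*‖² + ε_k for every x_* ∈ S_* and every k. -/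
open Filter
open scoped RealInnerProductSpace

theorem stmt_5
    {H : Type*} [NormedAddCommGroup H] [InnerProductSpace ℝ H] [CompleteSpace H]
    (C : Set H) (hCne : C.Nonempty) (hCcl : IsClosed C) (hCcv : Convex ℝ C)
    (f : H → ℝ) (hf : ConvexOn ℝ Set.univ f)
    (gradf : H → H)
    (hgrad : ∀ x d : H,
      Tendsto (fun t : ℝ => (f (x + t • d) - f x) / t) (nhdsWithin 0 (Set.Ioi 0))
        (nhds ⟪gradf x, d⟫))
    (PC : H → H)
    (hPC : ∀ x : H, PC x ∈ C ∧ ∀ z ∈ C, ⟪x - PC x, z - PC x⟫ ≤ 0)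
    (θ δ βlo βhi : ℝ)
    (hθ : θ ∈ Set.Ioo (0:ℝ) 1) (hδ : δ ∈ Set.Ioo (0:ℝ) 1)
    (hβlo : 0 < βlo) (hββ : βlo ≤ βhi)
    (β : ℕ → ℝ) (hβk : ∀ k, β k ∈ Set.Icc βlo βhi)
    (x z : ℕ → H) (α : ℕ → ℝ) (j : ℕ → ℕ)
    (hx0 : x 0 ∈ C)
    (hz : ∀ k, z k = x k - β k • gradf (x k))
    (hjA : ∀ k, f ((θ ^ j k) • PC (z k) + (1 - θ ^ j k) • x k)
        ≤ f (x k) - δ * θ ^ j k * ⟪gradf (x k), x k - PC (z k)⟫)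
    (hjmin : ∀ k, ∀ i < j k, ¬ (f ((θ ^ i) • PC (z k) + (1 - θ ^ i) • x k)
        ≤ f (x k) - δ * θ ^ i * ⟪gradf (x k), x k - PC (z k)⟫))
    (hα : ∀ k, α k = θ ^ j k)
    (hstep : ∀ k, x (k+1) = α k • PC (z k) + (1 - α k) • x k)
    (hS : ∃ xs ∈ C, ∀ y ∈ C, f xs ≤ f y)
    : ∃ ε : ℕ → ℝ, (∀ k, 0 ≤ ε k) ∧ Summable ε ∧
      ∀ xs : H, xs ∈ C → (∀ y ∈ C, f xs ≤ f y) → ∀ k,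
        ‖x (k+1) - xs‖ ^ 2 ≤ ‖x k - xs‖ ^ 2 + ε k := by
  obtain ⟨xs0, hxs0C, hxs0min⟩ := hS
  have hδ0 := hδ.1
  -- Gateaux gradient inequality from convexity
  have hgradineq : ∀ a b : H, ⟪gradf a, b - a⟫ ≤ f b - f a := by
    intro a b
    refine le_of_tendsto (hgrad a (b - a)) ?_
    have h1 : Set.Ioo (0:ℝ) 1 ∈ nhdsWithin (0:ℝ) (Set.Ioi 0) :=
      Ioo_mem_nhdsGT_of_mem ⟨le_refl _, one_pos⟩
    filter_upwards [h1] with t ht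
    have ht0 : 0 < t := ht.1
    have hcc : f (t • b + (1 - t) • a) ≤ t * f b + (1 - t) * f a :=
      hf.2 (Set.mem_univ b) (Set.mem_univ a) ht0.le (by linarith [ht.2]) (by ring)
    have heq : a + t • (b - a) = t • b + (1 - t) • a := by module
    rw [heq, div_le_iff₀ ht0]
    nlinarith [hcc]
  -- iterates stay in C
  have hα0 : ∀ k, 0 ≤ α k := by intro k; rw [hα]; exact pow_nonneg hθ.1.le _
  have hα1 : ∀ k, α k ≤ 1 := by
    intro k; rw [hα]; exact pow_le_one₀ hθ.1.le hθ.2.le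
  have hxC : ∀ k, x k ∈ C := by
    intro k
    induction k with
    | zero => exact hx0
    | succ n ih =>
      rw [hstep n]
      exact hCcv (hPC (z n)).1 ih (hα0 n) (by linarith [hα1 n]) (by ring)
  -- basic projection estimate with x k
  have hv : ∀ k, ‖x k - PC (z k)‖^2 ≤ β k * ⟪gradf (x k), x k - PC (z k)⟫ := by
    intro k
    have hproj := (hPC (z k)).2 (x k) (hxC k)
    have hzz : z k - PC (z k) = (x k - PC (z k)) - β k • gradf (x k) := by
      rw [hz k]; abel
    rw [hzz, inner_sub_left, real_inner_smul_left, real_inner_self_eq_norm_sq] at hproj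
    linarith
  have hVnn : ∀ k, 0 ≤ ⟪gradf (x k), x k - PC (z k)⟫ := by
    intro k
    have h1 := hv k
    have h2 : 0 ≤ ‖x k - PC (z k)‖^2 := by positivity
    have hb := (hβk k).1
    nlinarith
  -- descent
  have hfdec : ∀ k, f (x (k+1)) ≤ f (x k)
      - δ * (α k * ⟪gradf (x k), x k - PC (z k)⟫) := by
    intro k
    rw [hstep k, hα k]
    linarith [hjA k]
  have hfmono : ∀ k, f (x (k+1)) ≤ f (x k) := by
    intro k
    have h1 := hfdec k
    have h2 : 0 ≤ α k * ⟪gradf (x k), x k - PC (z k)⟫ := mul_nonneg (hα0 k) (hVnn k)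
    nlinarith
  have hcnn : (0:ℝ) ≤ 3 * βhi / δ := div_nonneg (by linarith) hδ0.le
  refine ⟨fun k => (3 * βhi / δ) * (f (x k) - f (x (k+1))), ?_, ?_, ?_⟩
  · intro k
    exact mul_nonneg hcnn (by linarith [hfmono k])
  · apply summable_of_sum_range_le
      (c := (3 * βhi / δ) * (f (x 0) - f xs0))
    · intro k; exact mul_nonneg hcnn (by linarith [hfmono k])
    · intro n
      have htel : ∑ i ∈ Finset.range n, (3 * βhi / δ) * (f (x i) - f (x (i+1)))
          = (3 * βhi / δ) * (f (x 0) - f (x n)) := by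
        rw [← Finset.mul_sum, Finset.sum_range_sub' (fun i => f (x i))]
      rw [htel]
      exact mul_le_mul_of_nonneg_left (by linarith [hxs0min (x n) (hxC n)]) hcnn
  · intro xs hxsC hxsmin k
    set V := ⟪gradf (x k), x k - PC (z k)⟫ with hVdef
    set A := ⟪x k - PC (z k), xs - x k⟫ with hAdef
    set N := ‖x k - PC (z k)‖^2 with hNdef
    have hNnn : 0 ≤ N := by rw [hNdef]; positivity
    -- projection inequality at xs
    have hproj := (hPC (z k)).2 xs hxsC
    have hzz : z k - PC (z k) = (x k - PC (z k)) - β k • gradf (x k) := by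
      rw [hz k]; abel
    rw [hzz, inner_sub_left, real_inner_smul_left] at hproj
    have hsplit : xs - PC (z k) = (xs - x k) + (x k - PC (z k)) := by abel
    rw [hsplit, inner_add_right, inner_add_right, real_inner_self_eq_norm_sq] at hproj
    -- hproj : A + N - β k * (⟪gradf xk, xs - xk⟫ + V) ≤ 0
    have hG : ⟪gradf (x k), xs - x k⟫ ≤ 0 := by
      have := hgradineq (x k) xs
      have := hxsmin (x k) (hxC k)
      linarith
    have hA : A ≤ β k * V - N := by
      have hbk := (hβk k).1
      nlinarith [mul_le_mul_of_nonneg_left hG (by linarith : (0:ℝ) ≤ β k)]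
    -- norm expansion
    have hxe : x (k+1) - xs = (x k - xs) - α k • (x k - PC (z k)) := by
      rw [hstep k]; module
    have hE : ‖x (k+1) - xs‖^2 = ‖x k - xs‖^2 + 2 * α k * A + (α k)^2 * N := by
      rw [hxe, @norm_sub_sq_real, real_inner_smul_right, norm_smul, mul_pow,
        Real.norm_eq_abs, sq_abs]
      have hAc : ⟪x k - xs, x k - PC (z k)⟫ = -A := by
        rw [real_inner_comm, show x k - xs = -(xs - x k) by abel, inner_neg_right, hAdef]
      rw [hAc, hNdef]
      ring
    have s2 : (α k)^2 * N ≤ α k * N := by nlinarith [mul_nonneg (mul_nonneg (sub_nonneg.2 (hα1 k)) (hα0 k)) hNnn]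
    have s3 : α k * N ≤ α k * (β k * V) := mul_le_mul_of_nonneg_left (hv k) (hα0 k)
    have s1 : α k * A ≤ α k * (β k * V - N) := mul_le_mul_of_nonneg_left hA (hα0 k)
    have s4 : α k * (β k * V) ≤ α k * (βhi * V) :=
      mul_le_mul_of_nonneg_left (mul_le_mul_of_nonneg_right (hβk k).2 (hVnn k)) (hα0 k)
    have hchain : ‖x (k+1) - xs‖^2 ≤ ‖x k - xs‖^2 + 3 * βhi * (α k * V) := by
      nlinarith [hE, s1, s2, s3, s4]
    have hfd : δ * (α k * V) ≤ f (x k) - f (x (k+1)) := by linarith [hfdec k]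
    have hfin : 3 * βhi * (α k * V) ≤ (3 * βhi / δ) * (f (x k) - f (x (k+1))) := by
      rw [div_mul_eq_mul_div, le_div_iff₀ hδ0]
      nlinarith [mul_le_mul_of_nonneg_left hfd (by linarith : (0:ℝ) ≤ 3 * βhi)]
    linarith
end

section
/- Assume S_* ≠ ∅ and that ∇f is uniformly continuous on every bounded subset of H. Then the sequence (x^k)_{k∈ℕ} generated by Algorithm A1 is bounded and every weak cluster point of (x^k)_{k∈ℕ} belongs to S_*. -/
open Filter
open scoped RealInnerProductSpace

lemma subgrad_aux {H : Type*} [NormedAddCommGroup H] [InnerProductSpace ℝ H]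
    (f : H → ℝ) (hf : ConvexOn ℝ Set.univ f) (g : H → H)
    (hgrad : ∀ x d : H,
      Tendsto (fun t : ℝ => (f (x + t • d) - f x) / t) (nhdsWithin 0 (Set.Ioi 0))
        (nhds ⟪g x, d⟫)) :
    ∀ a b : H, f a + ⟪g a, b - a⟫ ≤ f b := by
  intro a b
  have h := hgrad a (b - a)
  have hev : ∀ᶠ t in nhdsWithin (0:ℝ) (Set.Ioi 0),
      (f (a + t • (b - a)) - f a) / t ≤ f b - f a := by
    filter_upwards [Ioo_mem_nhdsGT_of_mem (Set.left_mem_Ico.2 one_pos)] with t ht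
    have hc := hf.2 (Set.mem_univ a) (Set.mem_univ b)
      (by linarith [ht.2] : (0:ℝ) ≤ 1 - t) (le_of_lt ht.1) (by ring)
    have heq : (1 - t) • a + t • b = a + t • (b - a) := by module
    rw [heq] at hc
    rw [div_le_iff₀ ht.1]
    simp only [smul_eq_mul] at hc
    nlinarith
  have := le_of_tendsto h hev
  linarith

lemma gradbound_aux {H : Type*} [NormedAddCommGroup H] [InnerProductSpace ℝ H]
    (g : H → H)
    (hUC : ∀ B : Set H, Bornology.IsBounded B → ∀ ε > 0, ∃ η > 0,
      ∀ a ∈ B, ∀ b ∈ B, ‖a - b‖ < η → ‖g a - g b‖ < ε) :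
    ∀ R : ℝ, ∃ G : ℝ, 0 ≤ G ∧ ∀ y : H, ‖y‖ ≤ R → ‖g y‖ ≤ G := by
  intro R
  rcases le_or_gt R 0 with hR | hR
  · refine ⟨‖g 0‖, norm_nonneg _, fun y hy => ?_⟩
    have : y = 0 := norm_le_zero_iff.1 (hy.trans hR)
    rw [this]
  · obtain ⟨η, hη, hball⟩ := hUC (Metric.closedBall 0 R) Metric.isBounded_closedBall 1 one_pos
    obtain ⟨N, hN⟩ := exists_nat_gt (R / η)
    refine ⟨‖g 0‖ + (N + 1), by positivity, fun y hy => ?_⟩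
    have hN1 : (0:ℝ) < (N:ℝ) + 1 := by positivity
    have hkey : ∀ i : ℕ, i ≤ N + 1 → ‖g ((((i:ℝ)) / ((N:ℝ) + 1)) • y)‖ ≤ ‖g 0‖ + i := by
      intro i hi
      induction i with
      | zero => simp
      | succ i ih =>
        have hi' : i ≤ N + 1 := Nat.le_of_succ_le hi
        have ih' := ih hi'
        have hc1 : (0:ℝ) ≤ (i:ℝ) / ((N:ℝ) + 1) := by positivity
        have hc2 : ((i:ℝ) + 1) / ((N:ℝ) + 1) ≤ 1 := by
          rw [div_le_one hN1]
          have : ((i:ℝ) + 1) ≤ (N:ℝ) + 1 := by exact_mod_cast hi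
          linarith
        have hm1 : (((i:ℝ)) / ((N:ℝ) + 1)) • y ∈ Metric.closedBall (0:H) R := by
          rw [Metric.mem_closedBall, dist_zero_right, norm_smul, Real.norm_eq_abs,
            abs_of_nonneg hc1]
          have : (i:ℝ) / ((N:ℝ) + 1) ≤ 1 := by
            apply (div_le_one hN1).2
            have : (i:ℝ) ≤ (N:ℝ) + 1 := by exact_mod_cast hi'
            linarith
          nlinarith [norm_nonneg y]
        have hm2 : ((((i:ℝ) + 1)) / ((N:ℝ) + 1)) • y ∈ Metric.closedBall (0:H) R := by
          rw [Metric.mem_closedBall, dist_zero_right, norm_smul, Real.norm_eq_abs,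
            abs_of_nonneg (by positivity)]
          nlinarith [norm_nonneg y]
        have hdist : ‖((((i:ℝ) + 1)) / ((N:ℝ) + 1)) • y - (((i:ℝ)) / ((N:ℝ) + 1)) • y‖ < η := by
          have he : ((((i:ℝ) + 1)) / ((N:ℝ) + 1)) • y - (((i:ℝ)) / ((N:ℝ) + 1)) • y
              = ((1:ℝ) / ((N:ℝ) + 1)) • y := by
            rw [← sub_smul]; congr 1; field_simp; ring
          rw [he, norm_smul, Real.norm_eq_abs, abs_of_nonneg (by positivity)]
          have hRη : R < η * ((N:ℝ) + 1) := by
            have := (div_lt_iff₀ hη).1 hN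
            nlinarith
          calc (1 / ((N:ℝ) + 1)) * ‖y‖ ≤ (1 / ((N:ℝ) + 1)) * R := by
                apply mul_le_mul_of_nonneg_left hy (by positivity)
            _ < η := by rw [div_mul_eq_mul_div, one_mul, div_lt_iff₀ hN1]; linarith
        have h1 := hball _ hm2 _ hm1 hdist
        have h2 : ‖g ((((i:ℝ) + 1) / ((N:ℝ) + 1)) • y)‖
            ≤ ‖g ((((i:ℝ)) / ((N:ℝ) + 1)) • y)‖
              + ‖g ((((i:ℝ) + 1) / ((N:ℝ) + 1)) • y) - g ((((i:ℝ)) / ((N:ℝ) + 1)) • y)‖ := by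
          have := norm_sub_norm_le (g ((((i:ℝ) + 1) / ((N:ℝ) + 1)) • y))
            (g ((((i:ℝ)) / ((N:ℝ) + 1)) • y))
          linarith [le_abs_self (‖g ((((i:ℝ) + 1) / ((N:ℝ) + 1)) • y)‖ - ‖g ((((i:ℝ)) / ((N:ℝ) + 1)) • y)‖)]
        push_cast
        push_cast at ih'
        linarith
    have := hkey (N + 1) le_rfl
    have he : ((((N:ℕ) + 1 : ℕ):ℝ) / ((N:ℝ) + 1)) • y = y := by
      push_cast
      rw [div_self (by positivity), one_smul]
    rw [he] at this
    push_cast at this ⊢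
    linarith

set_option maxHeartbeats 1000000 in
theorem stmt_6
    {H : Type*} [NormedAddCommGroup H] [InnerProductSpace ℝ H] [CompleteSpace H]
    (C : Set H) (hCne : C.Nonempty) (hCcl : IsClosed C) (hCcv : Convex ℝ C)
    (f : H → ℝ) (hf : ConvexOn ℝ Set.univ f)
    (gradf : H → H)
    (hgrad : ∀ x d : H,
      Tendsto (fun t : ℝ => (f (x + t • d) - f x) / t) (nhdsWithin 0 (Set.Ioi 0))
        (nhds ⟪gradf x, d⟫))
    (PC : H → H)
    (hPC : ∀ x : H, PC x ∈ C ∧ ∀ z ∈ C, ⟪x - PC x, z - PC x⟫ ≤ 0)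
    (θ δ βlo βhi : ℝ)
    (hθ : θ ∈ Set.Ioo (0:ℝ) 1) (hδ : δ ∈ Set.Ioo (0:ℝ) 1)
    (hβlo : 0 < βlo) (hββ : βlo ≤ βhi)
    (β : ℕ → ℝ) (hβk : ∀ k, β k ∈ Set.Icc βlo βhi)
    (x z : ℕ → H) (α : ℕ → ℝ) (j : ℕ → ℕ)
    (hx0 : x 0 ∈ C)
    (hz : ∀ k, z k = x k - β k • gradf (x k))
    (hjA : ∀ k, f ((θ ^ j k) • PC (z k) + (1 - θ ^ j k) • x k)
        ≤ f (x k) - δ * θ ^ j k * ⟪gradf (x k), x k - PC (z k)⟫)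
    (hjmin : ∀ k, ∀ i < j k, ¬ (f ((θ ^ i) • PC (z k) + (1 - θ ^ i) • x k)
        ≤ f (x k) - δ * θ ^ i * ⟪gradf (x k), x k - PC (z k)⟫))
    (hα : ∀ k, α k = θ ^ j k)
    (hstep : ∀ k, x (k+1) = α k • PC (z k) + (1 - α k) • x k)
    (hS : ∃ xs ∈ C, ∀ y ∈ C, f xs ≤ f y)
    (hUC : ∀ B : Set H, Bornology.IsBounded B → ∀ ε > 0, ∃ η > 0,
      ∀ a ∈ B, ∀ b ∈ B, ‖a - b‖ < η → ‖gradf a - gradf b‖ < ε)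
    : (∃ M : ℝ, ∀ k, ‖x k‖ ≤ M) ∧
      ∀ p : H, (∃ φ : ℕ → ℕ, StrictMono φ ∧
        ∀ y : H, Tendsto (fun k => ⟪x (φ k), y⟫) atTop (nhds ⟪p, y⟫)) →
        p ∈ C ∧ ∀ y ∈ C, f p ≤ f y := by
  obtain ⟨hθ0, hθ1⟩ := hθ
  obtain ⟨hδ0, hδ1⟩ := hδ
  obtain ⟨xs, hxsC, hxsmin⟩ := hS
  have hsubgrad := subgrad_aux f hf gradf hgrad
  -- basic facts about α
  have hα0 : ∀ k, 0 < α k := fun k => by rw [hα]; positivity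
  have hα1 : ∀ k, α k ≤ 1 := fun k => by
    rw [hα]; exact pow_le_one₀ (le_of_lt hθ0) (le_of_lt hθ1)
  -- x k ∈ C
  have hxC : ∀ k, x k ∈ C := by
    intro k
    induction k with
    | zero => exact hx0
    | succ k ih =>
      rw [hstep]
      exact hCcv (hPC (z k)).1 ih (le_of_lt (hα0 k)) (by linarith [hα1 k]) (by ring)
  -- notation γ k
  set γ : ℕ → ℝ := fun k => ⟪gradf (x k), x k - PC (z k)⟫ with hγdef
  have hzz : ∀ k, z k - PC (z k) = (x k - PC (z k)) - β k • gradf (x k) := by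
    intro k; rw [hz]; abel
  -- key inequality : ‖x k - PC(z k)‖^2 ≤ β k * γ k
  have key2 : ∀ k, ‖x k - PC (z k)‖^2 ≤ β k * γ k := by
    intro k
    have h := (hPC (z k)).2 (x k) (hxC k)
    rw [hzz, inner_sub_left, real_inner_smul_left, real_inner_self_eq_norm_sq] at h
    simp only [hγdef]
    linarith
  have hγ0 : ∀ k, 0 ≤ γ k := by
    intro k
    have h1 := key2 k
    have h2 := (hβk k).1
    nlinarith [sq_nonneg ‖x k - PC (z k)‖]
  -- descent
  have hdec : ∀ k, f (x (k+1)) ≤ f (x k) - δ * (α k * γ k) := by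
    intro k
    have := hjA k
    rw [hstep k, hα k]
    simp only [hγdef]
    linarith
  have hlow : ∀ k, f xs ≤ f (x k) := fun k => hxsmin _ (hxC k)
  -- telescoping
  have htel : ∀ n, δ * (∑ i ∈ Finset.range n, α i * γ i) ≤ f (x 0) - f (x n) := by
    intro n
    induction n with
    | zero => simp
    | succ n ih =>
      rw [Finset.sum_range_succ, mul_add]
      have := hdec n
      linarith
  have hsum : ∀ n, ∑ i ∈ Finset.range n, α i * γ i ≤ (f (x 0) - f xs) / δ := by
    intro n
    rw [le_div_iff₀ hδ0]
    have := htel n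
    have := hlow n
    nlinarith
  have hαγnn : ∀ k, 0 ≤ α k * γ k := fun k => mul_nonneg (le_of_lt (hα0 k)) (hγ0 k)
  have hsummable : Summable (fun k => α k * γ k) := summable_of_sum_range_le hαγnn hsum
  have hαγ0 : Tendsto (fun k => α k * γ k) atTop (nhds 0) := hsummable.tendsto_atTop_zero
  -- inner product identity helper
  have e2 : ∀ (a b c : H), ⟪b - a, a - c⟫ = ⟪a - b, c - b⟫ - ‖a - b‖^2 := by
    intro a b c
    rw [show ‖a - b‖^2 = ⟪a - b, a - b⟫ from (real_inner_self_eq_norm_sq _).symm]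
    simp only [inner_sub_left, inner_sub_right]
    linarith [real_inner_comm a b, real_inner_comm a c, real_inner_comm b c]
  -- Fejér-type inequality
  have hxs1 : ∀ k, ⟪PC (z k) - x k, x k - xs⟫ ≤ β k * γ k := by
    intro k
    have hp := (hPC (z k)).2 xs hxsC
    rw [hzz, inner_sub_left, real_inner_smul_left] at hp
    -- hp : ⟪x k - PC (z k), xs - PC (z k)⟫ - β k * ⟪gradf (x k), xs - PC (z k)⟫ ≤ 0
    have hB : ⟪gradf (x k), xs - x k⟫ ≤ 0 := by
      have := hsubgrad (x k) xs
      have := hlow k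
      linarith
    have e1 : ⟪gradf (x k), xs - PC (z k)⟫
        = ⟪gradf (x k), xs - x k⟫ + ⟪gradf (x k), x k - PC (z k)⟫ := by
      simp only [inner_sub_right]; ring
    have e2' := e2 (x k) (PC (z k)) xs
    have hβ2 := (hβk k).2
    have hβ1 := (hβk k).1
    have hγk := hγ0 k
    simp only [hγdef] at *
    nlinarith [sq_nonneg ‖x k - PC (z k)‖]
  have hfejer : ∀ k, ‖x (k+1) - xs‖^2 ≤ ‖x k - xs‖^2 + 3 * βhi * (α k * γ k) := by
    intro k
    have hd : x (k+1) - xs = (x k - xs) + α k • (PC (z k) - x k) := by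
      rw [hstep]; module
    rw [hd, norm_add_sq_real, real_inner_smul_right, norm_smul, Real.norm_eq_abs,
      abs_of_nonneg (le_of_lt (hα0 k)), mul_pow]
    have h1 : ⟪x k - xs, PC (z k) - x k⟫ ≤ β k * γ k := by
      rw [real_inner_comm]; exact hxs1 k
    have h2 : ‖PC (z k) - x k‖^2 ≤ β k * γ k := by
      rw [norm_sub_rev]; exact key2 k
    have hβ2 := (hβk k).2
    have hγk := hγ0 k
    have hαk := hα0 k
    have hαk1 := hα1 k
    have hβγ : 0 ≤ β k * γ k := mul_nonneg (le_trans (le_of_lt hβlo) (hβk k).1) hγk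
    have t1 : α k * ⟪x k - xs, PC (z k) - x k⟫ ≤ α k * (βhi * γ k) := by
      apply mul_le_mul_of_nonneg_left _ (le_of_lt hαk); nlinarith
    have h2' : ‖PC (z k) - x k‖ ^ 2 ≤ βhi * γ k := by nlinarith
    have hβhiγ : 0 ≤ βhi * γ k := mul_nonneg (le_trans (le_of_lt hβlo) hββ) hγk
    have t2 : α k ^ 2 * ‖PC (z k) - x k‖ ^ 2 ≤ α k * (βhi * γ k) := by
      have hα2 : α k ^ 2 ≤ α k := by nlinarith
      calc α k ^ 2 * ‖PC (z k) - x k‖ ^ 2 ≤ α k ^ 2 * (βhi * γ k) :=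
            mul_le_mul_of_nonneg_left h2' (sq_nonneg _)
        _ ≤ α k * (βhi * γ k) := mul_le_mul_of_nonneg_right hα2 hβhiγ
    nlinarith [t1, t2]
  -- bound on ‖x k - xs‖^2
  have hquad : ∀ n, ‖x n - xs‖^2 ≤ ‖x 0 - xs‖^2 + 3 * βhi * ((f (x 0) - f xs) / δ) := by
    have haux : ∀ n, ‖x n - xs‖^2 ≤ ‖x 0 - xs‖^2 + 3 * βhi * ∑ i ∈ Finset.range n, α i * γ i := by
      intro n
      induction n with
      | zero => simp
      | succ n ih =>
        rw [Finset.sum_range_succ, mul_add]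
        have := hfejer n
        linarith
    intro n
    have h1 := haux n
    have h2 := hsum n
    have hβhi : 0 < βhi := lt_of_lt_of_le hβlo hββ
    nlinarith
  -- bound on ‖x k‖
  set Mx : ℝ := ‖xs‖ + Real.sqrt (‖x 0 - xs‖^2 + 3 * βhi * ((f (x 0) - f xs) / δ)) with hMxdef
  have hxM : ∀ k, ‖x k‖ ≤ Mx := by
    intro k
    have h1 : ‖x k - xs‖ ≤ Real.sqrt (‖x 0 - xs‖^2 + 3 * βhi * ((f (x 0) - f xs) / δ)) := by
      have := hquad k
      nlinarith [Real.sq_sqrt (le_trans (sq_nonneg ‖x k - xs‖) this),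
        Real.sqrt_nonneg (‖x 0 - xs‖^2 + 3 * βhi * ((f (x 0) - f xs) / δ)), norm_nonneg (x k - xs)]
    calc ‖x k‖ = ‖(x k - xs) + xs‖ := by congr 1; abel
      _ ≤ ‖x k - xs‖ + ‖xs‖ := norm_add_le _ _
      _ ≤ Mx := by rw [hMxdef]; linarith
  have hγrfl : ∀ m, γ m = ⟪gradf (x m), x m - PC (z m)⟫ := fun m => by rw [hγdef]
  have hMx0 : 0 ≤ Mx := le_trans (norm_nonneg (x 0)) (hxM 0)
  -- gradient bound on the relevant ball
  obtain ⟨G, hG0, hG⟩ := gradbound_aux gradf hUC Mx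
  have hβhi0 : 0 ≤ βhi := le_trans (le_of_lt hβlo) hββ
  have hD0 : 0 ≤ βhi * G := mul_nonneg hβhi0 hG0
  have hdle : ∀ k, ‖x k - PC (z k)‖ ≤ βhi * G := by
    intro k
    by_contra hcon
    push_neg at hcon
    have h1 := key2 k
    have h2 : γ k ≤ ‖gradf (x k)‖ * ‖x k - PC (z k)‖ := by
      rw [hγrfl]; exact real_inner_le_norm _ _
    have h3 := hG _ (hxM k)
    have h4 := (hβk k).2
    have h5 := (hβk k).1
    have h6 : 0 ≤ ‖x k - PC (z k)‖ := norm_nonneg _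
    have hspos : 0 < ‖x k - PC (z k)‖ := lt_of_le_of_lt hD0 hcon
    have c1 : γ k ≤ G * ‖x k - PC (z k)‖ :=
      le_trans h2 (mul_le_mul_of_nonneg_right h3 h6)
    have c2 : β k * γ k ≤ βhi * (G * ‖x k - PC (z k)‖) := by
      have d1 : β k * γ k ≤ βhi * γ k := mul_le_mul_of_nonneg_right h4 (hγ0 k)
      have d2 : βhi * γ k ≤ βhi * (G * ‖x k - PC (z k)‖) :=
        mul_le_mul_of_nonneg_left c1 hβhi0
      linarith
    nlinarith [mul_lt_mul_of_pos_right hcon hspos]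
  refine ⟨⟨Mx, hxM⟩, ?_⟩
  rintro p ⟨φ, hφmono, hφconv⟩
  have hφtop : Tendsto φ atTop atTop := hφmono.tendsto_atTop
  have hαγφ : Tendsto (fun n => α (φ n) * γ (φ n)) atTop (nhds 0) := hαγ0.comp hφtop
  -- p belongs to C
  have hpC : p ∈ C := by
    have h1 : ∀ n, ⟪x (φ n), p - PC p⟫ ≤ ⟪PC p, p - PC p⟫ := by
      intro n
      have hh := (hPC p).2 (x (φ n)) (hxC (φ n))
      rw [inner_sub_right] at hh
      have h2 : ⟪p - PC p, x (φ n)⟫ = ⟪x (φ n), p - PC p⟫ := real_inner_comm _ _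
      have h3 : ⟪p - PC p, PC p⟫ = ⟪PC p, p - PC p⟫ := real_inner_comm _ _
      linarith
    have h4 : Tendsto (fun n => ⟪x (φ n), p - PC p⟫) atTop (nhds ⟪p, p - PC p⟫) :=
      hφconv _
    have h5 : ⟪p, p - PC p⟫ ≤ ⟪PC p, p - PC p⟫ :=
      le_of_tendsto h4 (Eventually.of_forall h1)
    have h6 : ‖p - PC p‖ ^ 2 ≤ 0 := by
      rw [← real_inner_self_eq_norm_sq, inner_sub_left]
      linarith
    have h8 : ‖p - PC p‖ = 0 := by nlinarith [norm_nonneg (p - PC p)]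
    have h7 : p = PC p := by
      rw [← sub_eq_zero]; exact norm_eq_zero.1 h8
    rw [h7]; exact (hPC p).1
  refine ⟨hpC, ?_⟩
  -- γ (φ n) → 0
  have hγφ0 : Tendsto (fun n => γ (φ n)) atTop (nhds 0) := by
    rw [Metric.tendsto_atTop]
    intro ε hε
    have hD1 : (0:ℝ) < βhi * G + 1 := by linarith
    obtain ⟨η, hη, hball⟩ := hUC (Metric.closedBall 0 (Mx + βhi * G))
      Metric.isBounded_closedBall ((1 - δ) * ε / (βhi * G + 1))
      (div_pos (by nlinarith) hD1)
    have hρ0 : (0:ℝ) < min ε (ε * θ * η / (βhi * G + 1)) :=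
      lt_min hε (div_pos (by positivity) hD1)
    rw [Metric.tendsto_atTop] at hαγφ
    obtain ⟨N, hN⟩ := hαγφ _ hρ0
    refine ⟨N, fun n hn => ?_⟩
    have hNn := hN n hn
    rw [Real.dist_eq, sub_zero, abs_of_nonneg (hαγnn _)] at hNn
    rw [Real.dist_eq, sub_zero, abs_of_nonneg (hγ0 _)]
    by_contra hcon
    push_neg at hcon
    rcases Nat.eq_zero_or_pos (j (φ n)) with hj0 | hj1
    · have ha1 : α (φ n) = 1 := by rw [hα, hj0, pow_zero]
      rw [ha1, one_mul] at hNn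
      have := min_le_left ε (ε * θ * η / (βhi * G + 1))
      linarith
    · -- Armijo failed at step j - 1
      have hfail := hjmin (φ n) (j (φ n) - 1) (by omega)
      push_neg at hfail
      set t := θ ^ (j (φ n) - 1) with htdef
      have ht0 : (0:ℝ) < t := pow_pos hθ0 _
      have ht1 : t ≤ 1 := pow_le_one₀ (le_of_lt hθ0) (le_of_lt hθ1)
      have htα : θ * t = α (φ n) := by
        rw [hα, htdef, ← pow_succ']
        congr 1
        omega
      set y := t • PC (z (φ n)) + (1 - t) • x (φ n) with hydef
      have hxy : x (φ n) - y = -(t • (PC (z (φ n)) - x (φ n))) := by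
        rw [hydef]; module
      have hsg := hsubgrad y (x (φ n))
      rw [hxy, inner_neg_right, real_inner_smul_right] at hsg
      rw [← hγrfl] at hfail
      have hcomb : -(δ * γ (φ n)) < ⟪gradf y, PC (z (φ n)) - x (φ n)⟫ := by
        have h1 : f (x (φ n)) - δ * t * γ (φ n)
            < f (x (φ n)) + t * ⟪gradf y, PC (z (φ n)) - x (φ n)⟫ := by linarith
        have h2 : t * (-(δ * γ (φ n))) < t * ⟪gradf y, PC (z (φ n)) - x (φ n)⟫ := by
          have he0 : t * (-(δ * γ (φ n))) = -(δ * t * γ (φ n)) := by ring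
          linarith
        exact (mul_lt_mul_iff_right₀ ht0).1 h2
      have hγinner : ⟪gradf (x (φ n)), PC (z (φ n)) - x (φ n)⟫ = -(γ (φ n)) := by
        rw [hγrfl, show PC (z (φ n)) - x (φ n) = -(x (φ n) - PC (z (φ n))) by abel,
          inner_neg_right]
      have hdiff : (1 - δ) * γ (φ n)
          < ⟪gradf y - gradf (x (φ n)), PC (z (φ n)) - x (φ n)⟫ := by
        rw [inner_sub_left, hγinner]
        linarith
      have hxball : x (φ n) ∈ Metric.closedBall (0:H) (Mx + βhi * G) := by
        rw [Metric.mem_closedBall, dist_zero_right]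
        linarith [hxM (φ n)]
      have hnd : ‖PC (z (φ n)) - x (φ n)‖ ≤ βhi * G := by
        rw [norm_sub_rev]; exact hdle (φ n)
      have hyball : y ∈ Metric.closedBall (0:H) (Mx + βhi * G) := by
        rw [Metric.mem_closedBall, dist_zero_right]
        have hye : y = x (φ n) + t • (PC (z (φ n)) - x (φ n)) := by rw [hydef]; module
        rw [hye]
        calc ‖x (φ n) + t • (PC (z (φ n)) - x (φ n))‖
            ≤ ‖x (φ n)‖ + ‖t • (PC (z (φ n)) - x (φ n))‖ := norm_add_le _ _
          _ ≤ Mx + βhi * G := by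
              rw [norm_smul, Real.norm_eq_abs, abs_of_nonneg (le_of_lt ht0)]
              nlinarith [hxM (φ n), norm_nonneg (PC (z (φ n)) - x (φ n))]
      have hαbound : α (φ n) < θ * η / (βhi * G + 1) := by
        have hαsmall : α (φ n) * ε ≤ α (φ n) * γ (φ n) :=
          mul_le_mul_of_nonneg_left hcon (le_of_lt (hα0 (φ n)))
        have hρ2 : min ε (ε * θ * η / (βhi * G + 1)) ≤ ε * θ * η / (βhi * G + 1) :=
          min_le_right _ _
        have h1 : α (φ n) * ε < ε * θ * η / (βhi * G + 1) := by linarith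
        by_contra hc2
        push_neg at hc2
        have : ε * (θ * η / (βhi * G + 1)) ≤ ε * α (φ n) :=
          mul_le_mul_of_nonneg_left hc2 (le_of_lt hε)
        have he2 : ε * (θ * η / (βhi * G + 1)) = ε * θ * η / (βhi * G + 1) := by ring
        nlinarith
      have hdist : ‖y - x (φ n)‖ < η := by
        have hky : y - x (φ n) = t • (PC (z (φ n)) - x (φ n)) := by rw [hydef]; module
        rw [hky, norm_smul, Real.norm_eq_abs, abs_of_nonneg (le_of_lt ht0)]
        have htsmall : t < η / (βhi * G + 1) := by
          rw [← htα] at hαbound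
          have he3 : θ * η / (βhi * G + 1) = θ * (η / (βhi * G + 1)) := by ring
          rw [he3] at hαbound
          exact (mul_lt_mul_iff_right₀ hθ0).1 hαbound
        have hη1 : 0 < η / (βhi * G + 1) := div_pos hη hD1
        calc t * ‖PC (z (φ n)) - x (φ n)‖
            ≤ t * (βhi * G) := mul_le_mul_of_nonneg_left hnd (le_of_lt ht0)
          _ < (η / (βhi * G + 1)) * (βhi * G + 1) := by
              have ha : t * (βhi * G) ≤ (η / (βhi * G + 1)) * (βhi * G) :=
                mul_le_mul_of_nonneg_right (le_of_lt htsmall) hD0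
              nlinarith [hη1]
          _ = η := by field_simp
      have hballapp := hball y hyball (x (φ n)) hxball hdist
      have hCS : ⟪gradf y - gradf (x (φ n)), PC (z (φ n)) - x (φ n)⟫
          ≤ ‖gradf y - gradf (x (φ n))‖ * ‖PC (z (φ n)) - x (φ n)‖ :=
        real_inner_le_norm _ _
      have hfin : (1 - δ) * γ (φ n) < (1 - δ) * ε := by
        have h9 : ‖gradf y - gradf (x (φ n))‖ * ‖PC (z (φ n)) - x (φ n)‖
            < ((1 - δ) * ε / (βhi * G + 1)) * (βhi * G + 1) := by
          nlinarith [norm_nonneg (gradf y - gradf (x (φ n))),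
            norm_nonneg (PC (z (φ n)) - x (φ n)),
            div_pos (show (0:ℝ) < (1-δ)*ε by nlinarith) hD1]
        have h10 : ((1 - δ) * ε / (βhi * G + 1)) * (βhi * G + 1) = (1 - δ) * ε := by
          field_simp
        linarith
      have := (mul_lt_mul_iff_right₀ (show (0:ℝ) < 1 - δ by linarith)).1 hfin
      linarith
  -- distance to projection tends to 0 along the subsequence
  have hdφ0 : Tendsto (fun n => ‖x (φ n) - PC (z (φ n))‖) atTop (nhds 0) := by
    have hb : ∀ n, ‖x (φ n) - PC (z (φ n))‖ ≤ Real.sqrt (βhi * γ (φ n)) := by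
      intro n
      have h1 : ‖x (φ n) - PC (z (φ n))‖ ^ 2 ≤ βhi * γ (φ n) := by
        have := key2 (φ n)
        nlinarith [(hβk (φ n)).2, hγ0 (φ n)]
      calc ‖x (φ n) - PC (z (φ n))‖
          = Real.sqrt (‖x (φ n) - PC (z (φ n))‖ ^ 2) :=
            (Real.sqrt_sq (norm_nonneg _)).symm
        _ ≤ Real.sqrt (βhi * γ (φ n)) := Real.sqrt_le_sqrt h1
    have hs : Tendsto (fun n => Real.sqrt (βhi * γ (φ n))) atTop (nhds 0) := by
      have l0 : Tendsto (fun n => βhi * γ (φ n)) atTop (nhds 0) := by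
        have := hγφ0.const_mul βhi
        simpa using this
      have := (Real.continuous_sqrt.tendsto 0).comp l0
      simpa [Function.comp_def] using this
    exact tendsto_of_tendsto_of_tendsto_of_le_of_le tendsto_const_nhds hs
      (fun n => norm_nonneg _) hb
  -- optimality
  intro y hy
  have hKy0 : 0 ≤ ‖y‖ + (Mx + βhi * G) := by
    have := norm_nonneg y
    linarith
  have hlb : ∀ n, f p + ⟪gradf p, x (φ n) - p⟫
      - ‖x (φ n) - PC (z (φ n))‖ * (‖y‖ + (Mx + βhi * G)) / βlo - γ (φ n) ≤ f y := by
    intro n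
    have hA := hsubgrad (x (φ n)) y
    have hB := hsubgrad p (x (φ n))
    have hp := (hPC (z (φ n))).2 y hy
    rw [hzz, inner_sub_left, real_inner_smul_left] at hp
    have hwb : ‖y - PC (z (φ n))‖ ≤ ‖y‖ + (Mx + βhi * G) := by
      calc ‖y - PC (z (φ n))‖ ≤ ‖y‖ + ‖PC (z (φ n))‖ := norm_sub_le _ _
        _ ≤ ‖y‖ + (Mx + βhi * G) := by
            have h11 : ‖PC (z (φ n))‖ ≤ Mx + βhi * G := by
              calc ‖PC (z (φ n))‖ = ‖x (φ n) - (x (φ n) - PC (z (φ n)))‖ := by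
                    congr 1; abel
                _ ≤ ‖x (φ n)‖ + ‖x (φ n) - PC (z (φ n))‖ := norm_sub_le _ _
                _ ≤ Mx + βhi * G := add_le_add (hxM (φ n)) (hdle (φ n))
            linarith
    have hCS2 : -(‖x (φ n) - PC (z (φ n))‖ * (‖y‖ + (Mx + βhi * G)))
        ≤ ⟪x (φ n) - PC (z (φ n)), y - PC (z (φ n))⟫ := by
      have h1 := abs_real_inner_le_norm (x (φ n) - PC (z (φ n))) (y - PC (z (φ n)))
      have h2 : ‖x (φ n) - PC (z (φ n))‖ * ‖y - PC (z (φ n))‖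
          ≤ ‖x (φ n) - PC (z (φ n))‖ * (‖y‖ + (Mx + βhi * G)) :=
        mul_le_mul_of_nonneg_left hwb (norm_nonneg _)
      have h3 := neg_abs_le ⟪x (φ n) - PC (z (φ n)), y - PC (z (φ n))⟫
      linarith
    have hg1 : -(‖x (φ n) - PC (z (φ n))‖ * (‖y‖ + (Mx + βhi * G))) / βlo
        ≤ ⟪gradf (x (φ n)), y - PC (z (φ n))⟫ := by
      have hβ1 := (hβk (φ n)).1
      have hβpos : 0 < β (φ n) := lt_of_lt_of_le hβlo hβ1
      have hc0 : 0 ≤ ‖x (φ n) - PC (z (φ n))‖ * (‖y‖ + (Mx + βhi * G)) :=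
        mul_nonneg (norm_nonneg _) hKy0
      rw [div_le_iff₀ hβlo]
      rcases le_or_gt 0 (⟪gradf (x (φ n)), y - PC (z (φ n))⟫) with hc | hc
      · nlinarith
      · nlinarith
    have he : ⟪gradf (x (φ n)), y - x (φ n)⟫
        = ⟪gradf (x (φ n)), y - PC (z (φ n))⟫ - γ (φ n) := by
      rw [hγrfl]
      simp only [inner_sub_right]
      ring
    have hg1' : -(‖x (φ n) - PC (z (φ n))‖ * (‖y‖ + (Mx + βhi * G)) / βlo)
        ≤ ⟪gradf (x (φ n)), y - PC (z (φ n))⟫ := by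
      rw [← neg_div]; exact hg1
    linarith
  have hlim : Tendsto (fun n => f p + ⟪gradf p, x (φ n) - p⟫
      - ‖x (φ n) - PC (z (φ n))‖ * (‖y‖ + (Mx + βhi * G)) / βlo - γ (φ n))
      atTop (nhds (f p)) := by
    have l1 : Tendsto (fun n => ⟪gradf p, x (φ n) - p⟫) atTop (nhds 0) := by
      have l1a := (hφconv (gradf p)).sub_const ⟪p, gradf p⟫
      have l1b : (fun n => ⟪x (φ n), gradf p⟫ - ⟪p, gradf p⟫)
          = fun n => ⟪gradf p, x (φ n) - p⟫ := by
        funext n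
        rw [inner_sub_right, real_inner_comm (gradf p) (x (φ n)),
          real_inner_comm (gradf p) p]
      rw [l1b, sub_self] at l1a
      exact l1a
    have l2 : Tendsto (fun n => ‖x (φ n) - PC (z (φ n))‖ * (‖y‖ + (Mx + βhi * G)) / βlo)
        atTop (nhds 0) := by
      have := (hdφ0.mul_const (‖y‖ + (Mx + βhi * G))).div_const βlo
      simpa using this
    have l3 := ((tendsto_const_nhds (α := ℕ) (x := f p)).add l1).sub l2
    have l4 := l3.sub hγφ0
    simpa using l4
  exact le_of_tendsto hlim (Eventually.of_forall hlb)
end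

section
/- Assume S_* ≠ ∅ and that ∇f is uniformly continuous on every bounded subset of H. Then the sequence (x^k)_{k∈ℕ} generated by Algorithm A1 converges weakly to some point of S_*. -/
open Filter
open scoped RealInnerProductSpace
open Topology

section Aux

variable {H : Type*} [NormedAddCommGroup H] [InnerProductSpace ℝ H]

theorem aux_subgrad (f : H → ℝ) (hf : ConvexOn ℝ Set.univ f) (gradf : H → H)
    (hgrad : ∀ x d : H,
      Tendsto (fun t : ℝ => (f (x + t • d) - f x) / t) (nhdsWithin 0 (Set.Ioi 0))
        (nhds ⟪gradf x, d⟫)) :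
    ∀ a b : H, ⟪gradf a, b - a⟫ ≤ f b - f a := by
  intro a b
  refine le_of_tendsto (hgrad a (b - a)) ?_
  filter_upwards [Ioo_mem_nhdsGT_of_mem (by constructor <;> norm_num : (0:ℝ) ∈ Set.Ico (0:ℝ) 1)]
    with t ht
  obtain ⟨ht0, ht1⟩ := ht
  have h : f (t • b + (1 - t) • a) ≤ t * f b + (1 - t) * f a :=
    hf.2 (Set.mem_univ b) (Set.mem_univ a) ht0.le (by linarith) (by ring)
  have he : a + t • (b - a) = t • b + (1 - t) • a := by module
  rw [he, div_le_iff₀ ht0]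
  nlinarith [h]

theorem aux_gradbound (gradf : H → H)
    (hUC : ∀ B : Set H, Bornology.IsBounded B → ∀ ε > 0, ∃ η > 0,
      ∀ a ∈ B, ∀ b ∈ B, ‖a - b‖ < η → ‖gradf a - gradf b‖ < ε) :
    ∀ R : ℝ, ∃ G : ℝ, 0 ≤ G ∧ ∀ a : H, ‖a‖ ≤ R → ‖gradf a‖ ≤ G := by
  intro R
  rcases le_or_gt R 0 with hR | hR
  · refine ⟨‖gradf 0‖, norm_nonneg _, fun a ha => ?_⟩
    have : a = 0 := by
      have : ‖a‖ ≤ 0 := ha.trans hR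
      simpa [norm_le_zero_iff] using this
    rw [this]
  · obtain ⟨η, hη, hB⟩ := hUC (Metric.closedBall 0 R) Metric.isBounded_closedBall 1 one_pos
    obtain ⟨n, hn⟩ := exists_nat_gt (R / η)
    have hn0 : 0 < (n : ℝ) := lt_of_le_of_lt (div_nonneg hR.le hη.le) hn
    refine ⟨‖gradf 0‖ + n, by positivity, fun a ha => ?_⟩
    have hmem : ∀ i : ℕ, i ≤ n → (((i : ℝ) / (n : ℝ)) • a) ∈ Metric.closedBall (0 : H) R := by
      intro i hi
      simp only [Metric.mem_closedBall, dist_zero_right, norm_smul, Real.norm_eq_abs]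
      have h1 : |((i : ℝ)) / (n : ℝ)| ≤ 1 := by
        rw [abs_div, abs_of_nonneg (by positivity : (0:ℝ) ≤ (i:ℝ)),
          abs_of_nonneg hn0.le, div_le_one hn0]
        exact_mod_cast hi
      nlinarith [norm_nonneg a, abs_nonneg ((i : ℝ) / (n : ℝ))]
    have key : ∀ i : ℕ, i ≤ n → ‖gradf (((i : ℝ) / (n : ℝ)) • a)‖ ≤ ‖gradf 0‖ + i := by
      intro i
      induction i with
      | zero => intro _; simp
      | succ m ih =>
        intro hm
        have hm' : m ≤ n := le_trans (Nat.le_succ m) hm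
        have h3 : ‖(((m + 1 : ℕ) : ℝ) / (n : ℝ)) • a - (((m : ℕ) : ℝ) / (n : ℝ)) • a‖ < η := by
          have he : (((m + 1 : ℕ) : ℝ) / (n : ℝ)) • a - (((m : ℕ) : ℝ) / (n : ℝ)) • a
              = ((1 : ℝ) / (n : ℝ)) • a := by
            rw [← sub_smul]
            congr 1
            push_cast
            field_simp
            ring
          rw [he, norm_smul, Real.norm_eq_abs,
            abs_of_nonneg (by positivity : (0:ℝ) ≤ (1:ℝ) / (n:ℝ))]
          have hRn : R / (n : ℝ) < η := by
            rw [div_lt_iff₀ hn0]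
            calc R = (R / η) * η := by field_simp
            _ < n * η := mul_lt_mul_of_pos_right hn hη
            _ = η * n := by ring
          calc 1 / (n:ℝ) * ‖a‖ ≤ 1 / (n:ℝ) * R :=
                mul_le_mul_of_nonneg_left ha (by positivity)
          _ = R / (n : ℝ) := by ring
          _ < η := hRn
        have h5 : ‖gradf ((((m + 1 : ℕ) : ℝ) / (n : ℝ)) • a)
            - gradf ((((m : ℕ) : ℝ) / (n : ℝ)) • a)‖ ≤ 1 :=
          (hB _ (hmem (m+1) hm) _ (hmem m hm') h3).le
        have h6 := norm_sub_norm_le (gradf ((((m + 1 : ℕ) : ℝ) / (n : ℝ)) • a))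
          (gradf ((((m : ℕ) : ℝ) / (n : ℝ)) • a))
        have h7 := ih hm'
        push_cast at h5 h6 h7 ⊢
        linarith
    have hfin := key n le_rfl
    rw [div_self hn0.ne', one_smul] at hfin
    exact hfin

theorem aux_ultra_lim (U : Ultrafilter ℕ) (u : ℕ → ℝ) (M : ℝ) (hM : ∀ k, |u k| ≤ M) :
    ∃ l : ℝ, Tendsto u (U : Filter ℕ) (𝓝 l) := by
  have h1 : Set.Icc (-M) M ∈ Filter.map u (U : Filter ℕ) := by
    refine mem_map.2 (univ_mem' fun k => ?_)
    exact ⟨neg_le_of_abs_le (hM k), le_of_abs_le (hM k)⟩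
  obtain ⟨l, -, hl⟩ := isCompact_Icc.ultrafilter_le_nhds (U.map u)
    (by rwa [le_principal_iff, Ultrafilter.coe_map])
  exact ⟨l, by rwa [Ultrafilter.coe_map] at hl⟩

theorem aux_weaklim [CompleteSpace H] (U : Ultrafilter ℕ) (x : ℕ → H) (M : ℝ)
    (hM : ∀ k, ‖x k‖ ≤ M) :
    ∃ p : H, ∀ y : H, Tendsto (fun k => ⟪x k, y⟫) (U : Filter ℕ) (𝓝 ⟪p, y⟫) := by
  have hex : ∀ y : H, ∃ l : ℝ, Tendsto (fun k => ⟪x k, y⟫) (U : Filter ℕ) (𝓝 l) := by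
    intro y
    refine aux_ultra_lim U _ (M * ‖y‖) fun k => ?_
    calc |⟪x k, y⟫| ≤ ‖x k‖ * ‖y‖ := abs_real_inner_le_norm _ _
    _ ≤ M * ‖y‖ := mul_le_mul_of_nonneg_right (hM k) (norm_nonneg _)
  choose l hl using hex
  have hadd : ∀ y w : H, l (y + w) = l y + l w := by
    intro y w
    refine tendsto_nhds_unique (hl (y + w)) ?_
    have := (hl y).add (hl w)
    simpa [inner_add_right] using this
  have hsmul : ∀ (c : ℝ) (y : H), l (c • y) = c * l y := by
    intro c y
    refine tendsto_nhds_unique (hl (c • y)) ?_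
    have := (hl y).const_mul c
    simpa [real_inner_smul_right, mul_comm] using this
  have hbound : ∀ y : H, |l y| ≤ M * ‖y‖ := by
    intro y
    refine le_of_tendsto (hl y).abs (univ_mem' fun k => ?_)
    calc |⟪x k, y⟫| ≤ ‖x k‖ * ‖y‖ := abs_real_inner_le_norm _ _
    _ ≤ M * ‖y‖ := mul_le_mul_of_nonneg_right (hM k) (norm_nonneg _)
  let L : H →ₗ[ℝ] ℝ :=
    { toFun := l
      map_add' := hadd
      map_smul' := hsmul }
  let L' : H →L[ℝ] ℝ := L.mkContinuous M fun y => by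
    simpa [L, Real.norm_eq_abs] using hbound y
  refine ⟨(InnerProductSpace.toDual ℝ H).symm L', fun y => ?_⟩
  have h2 : ⟪(InnerProductSpace.toDual ℝ H).symm L', y⟫ = L' y :=
    InnerProductSpace.toDual_symm_apply
  rw [h2]
  exact hl y

theorem aux_qf (a e : ℕ → ℝ) (ha0 : ∀ k, 0 ≤ a k) (he0 : ∀ k, 0 ≤ e k) (hsum : Summable e)
    (hrec : ∀ k, a (k + 1) ≤ a k + e k) : ∃ L : ℝ, Tendsto a atTop (𝓝 L) := by
  set T : ℕ → ℝ := fun n => ∑' i, e (i + n) with hT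
  have hTsum : ∀ n, Summable fun i => e (i + n) := fun n => (summable_nat_add_iff n).2 hsum
  have hT0 : ∀ n, 0 ≤ T n := fun n => tsum_nonneg fun i => he0 _
  have hTrec : ∀ n, T n = e n + T (n + 1) := by
    intro n
    have h := Summable.tsum_eq_zero_add (hTsum n)
    simp only [zero_add] at h
    simp only [hT]
    rw [h]
    congr 1
    apply tsum_congr
    intro i
    congr 1
    omega
  have hanti : Antitone fun n => a n + T n := by
    apply antitone_nat_of_succ_le
    intro k
    have h1 := hrec k
    have h2 := hTrec k
    show a (k + 1) + T (k + 1) ≤ a k + T k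
    linarith
  have hbdd : BddBelow (Set.range fun n => a n + T n) := by
    refine ⟨0, fun r hr => ?_⟩
    obtain ⟨n, rfl⟩ := hr
    exact add_nonneg (ha0 n) (hT0 n)
  have h1 : Tendsto (fun n => a n + T n) atTop (𝓝 (⨅ n, (a n + T n))) :=
    tendsto_atTop_ciInf hanti hbdd
  have h2 : Tendsto T atTop (𝓝 0) := tendsto_sum_nat_add e
  refine ⟨(⨅ n, (a n + T n)) - 0, ?_⟩
  have h3 := h1.sub h2
  exact h3.congr fun n => by simp

end Aux

set_option maxHeartbeats 2000000 in
theorem stmt_7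
    {H : Type*} [NormedAddCommGroup H] [InnerProductSpace ℝ H] [CompleteSpace H]
    (C : Set H) (hCne : C.Nonempty) (hCcl : IsClosed C) (hCcv : Convex ℝ C)
    (f : H → ℝ) (hf : ConvexOn ℝ Set.univ f)
    (gradf : H → H)
    (hgrad : ∀ x d : H,
      Tendsto (fun t : ℝ => (f (x + t • d) - f x) / t) (nhdsWithin 0 (Set.Ioi 0))
        (nhds ⟪gradf x, d⟫))
    (PC : H → H)
    (hPC : ∀ x : H, PC x ∈ C ∧ ∀ z ∈ C, ⟪x - PC x, z - PC x⟫ ≤ 0)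
    (θ δ βlo βhi : ℝ)
    (hθ : θ ∈ Set.Ioo (0:ℝ) 1) (hδ : δ ∈ Set.Ioo (0:ℝ) 1)
    (hβlo : 0 < βlo) (hββ : βlo ≤ βhi)
    (β : ℕ → ℝ) (hβk : ∀ k, β k ∈ Set.Icc βlo βhi)
    (x z : ℕ → H) (α : ℕ → ℝ) (j : ℕ → ℕ)
    (hx0 : x 0 ∈ C)
    (hz : ∀ k, z k = x k - β k • gradf (x k))
    (hjA : ∀ k, f ((θ ^ j k) • PC (z k) + (1 - θ ^ j k) • x k)
        ≤ f (x k) - δ * θ ^ j k * ⟪gradf (x k), x k - PC (z k)⟫)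
    (hjmin : ∀ k, ∀ i < j k, ¬ (f ((θ ^ i) • PC (z k) + (1 - θ ^ i) • x k)
        ≤ f (x k) - δ * θ ^ i * ⟪gradf (x k), x k - PC (z k)⟫))
    (hα : ∀ k, α k = θ ^ j k)
    (hstep : ∀ k, x (k+1) = α k • PC (z k) + (1 - α k) • x k)
    (hS : ∃ xs ∈ C, ∀ y ∈ C, f xs ≤ f y)
    (hUC : ∀ B : Set H, Bornology.IsBounded B → ∀ ε > 0, ∃ η > 0,
      ∀ a ∈ B, ∀ b ∈ B, ‖a - b‖ < η → ‖gradf a - gradf b‖ < ε)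
    : ∃ p : H, (p ∈ C ∧ ∀ y ∈ C, f p ≤ f y) ∧
      ∀ y : H, Tendsto (fun k => ⟪x k, y⟫) atTop (nhds ⟪p, y⟫) := by
  obtain ⟨θ0, θ1⟩ := hθ
  obtain ⟨δ0, δ1⟩ := hδ
  obtain ⟨xs, hxsC, hxsmin⟩ := hS
  have hβpos : ∀ k, 0 < β k := fun k => lt_of_lt_of_le hβlo (hβk k).1
  have hβhi0 : 0 < βhi := lt_of_lt_of_le hβlo hββ
  have subgrad : ∀ a b : H, ⟪gradf a, b - a⟫ ≤ f b - f a := aux_subgrad f hf gradf hgrad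
  have hα0 : ∀ k, 0 < α k := fun k => (hα k) ▸ pow_pos θ0 _
  have hα1 : ∀ k, α k ≤ 1 := fun k => (hα k) ▸ pow_le_one₀ θ0.le θ1.le
  have hxC : ∀ k, x k ∈ C := by
    intro k
    induction k with
    | zero => exact hx0
    | succ n ih =>
      rw [hstep n]
      exact hCcv (hPC (z n)).1 ih (hα0 n).le (by linarith [hα1 n]) (by ring)
  -- γ k := ⟪gradf (x k), x k - PC (z k)⟫ , v k := x k - PC (z k)
  have hproj : ∀ k, ‖x k - PC (z k)‖ ^ 2 ≤ β k * ⟪gradf (x k), x k - PC (z k)⟫ := by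
    intro k
    have h := (hPC (z k)).2 (x k) (hxC k)
    have e1 : z k - PC (z k) = (x k - PC (z k)) - β k • gradf (x k) := by
      rw [hz k]; abel
    rw [e1, inner_sub_left, real_inner_smul_left, real_inner_self_eq_norm_sq] at h
    linarith
  have hγ0 : ∀ k, 0 ≤ ⟪gradf (x k), x k - PC (z k)⟫ := by
    intro k
    nlinarith [hproj k, sq_nonneg ‖x k - PC (z k)‖, hβpos k]
  have hαγ0 : ∀ k, 0 ≤ α k * ⟪gradf (x k), x k - PC (z k)⟫ :=
    fun k => mul_nonneg (hα0 k).le (hγ0 k)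
  have hdesc : ∀ k, f (x (k+1)) ≤ f (x k) - δ * (α k * ⟪gradf (x k), x k - PC (z k)⟫) := by
    intro k
    have h := hjA k
    rw [hstep k, hα k]
    calc f (θ ^ j k • PC (z k) + (1 - θ ^ j k) • x k)
        ≤ f (x k) - δ * θ ^ j k * ⟪gradf (x k), x k - PC (z k)⟫ := h
    _ = f (x k) - δ * (θ ^ j k * ⟪gradf (x k), x k - PC (z k)⟫) := by ring
  have hfanti : ∀ m k, k ≤ m → f (x m) ≤ f (x k) := by
    intro m k hkm
    induction m with
    | zero => simp_all
    | succ n ih =>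
      rcases Nat.lt_or_ge k (n+1) with h | h
      · have := hdesc n
        have h2 := ih (Nat.lt_succ_iff.mp h)
        have := hαγ0 n
        nlinarith
      · have : k = n + 1 := le_antisymm hkm h
        rw [this]
  have hlow : ∀ k, f xs ≤ f (x k) := fun k => hxsmin _ (hxC k)
  -- summability
  have hpsum : ∀ n : ℕ, ∑ i ∈ Finset.range n, (α i * ⟪gradf (x i), x i - PC (z i)⟫)
      ≤ (f (x 0) - f xs) / δ := by
    intro n
    have key : ∀ n : ℕ, δ * ∑ i ∈ Finset.range n, (α i * ⟪gradf (x i), x i - PC (z i)⟫)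
        ≤ f (x 0) - f (x n) := by
      intro n
      induction n with
      | zero => simp
      | succ m ih =>
        rw [Finset.sum_range_succ]
        have := hdesc m
        nlinarith
    have h1 := key n
    have h2 := hlow n
    rw [le_div_iff₀ δ0]
    nlinarith
  have hsumm : Summable (fun k => α k * ⟪gradf (x k), x k - PC (z k)⟫) :=
    summable_of_sum_range_le hαγ0 hpsum
  set E : ℝ := ∑' k, α k * ⟪gradf (x k), x k - PC (z k)⟫ with hE
  have hE0 : 0 ≤ E := tsum_nonneg hαγ0
  have hEub : ∀ n : ℕ, ∑ i ∈ Finset.range n, (α i * ⟪gradf (x i), x i - PC (z i)⟫) ≤ E :=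
    fun n => Summable.sum_le_tsum _ (fun i _ => hαγ0 i) hsumm
  -- Fejer inequality
  have hfej : ∀ s : H, s ∈ C → f s ≤ f xs → ∀ k,
      ‖x (k+1) - s‖ ^ 2 ≤ ‖x k - s‖ ^ 2
        + 2 * βhi * (α k * ⟪gradf (x k), x k - PC (z k)⟫) := by
    intro s hsC hsf k
    have hfs : f s ≤ f (x k) := hsf.trans (hlow k)
    have hkey : ‖x k - PC (z k)‖ ^ 2 - β k * ⟪gradf (x k), x k - PC (z k)⟫
        ≤ ⟪x k - s, x k - PC (z k)⟫ := by
      have e1 : (⟪x k - s, x k - PC (z k)⟫ : ℝ)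
          = ‖x k - PC (z k)‖ ^ 2 + ⟪PC (z k) - s, x k - PC (z k)⟫ := by
        rw [← real_inner_self_eq_norm_sq, ← inner_add_left]
        congr 1
        abel
      have e2 : (⟪PC (z k) - s, x k - PC (z k)⟫ : ℝ)
          = ⟪PC (z k) - s, β k • gradf (x k)⟫ + ⟪PC (z k) - s, z k - PC (z k)⟫ := by
        rw [← inner_add_right]
        congr 1
        rw [hz k]
        abel
      have e3 : (0:ℝ) ≤ ⟪PC (z k) - s, z k - PC (z k)⟫ := by
        have h4 : (⟪PC (z k) - s, z k - PC (z k)⟫ : ℝ)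
            = - ⟪z k - PC (z k), s - PC (z k)⟫ := by
          rw [real_inner_comm, ← inner_neg_right]
          congr 1
          abel
        rw [h4]
        have := (hPC (z k)).2 s hsC
        linarith
      have e4 : (⟪PC (z k) - s, β k • gradf (x k)⟫ : ℝ)
          = β k * (- ⟪gradf (x k), x k - PC (z k)⟫ + ⟪gradf (x k), x k - s⟫) := by
        rw [real_inner_smul_right, real_inner_comm]
        congr 1
        rw [← inner_neg_right, ← inner_add_right]
        congr 1
        abel
      have e5 : (0:ℝ) ≤ ⟪gradf (x k), x k - s⟫ := by
        have h5 := subgrad (x k) s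
        have h6 : (⟪gradf (x k), x k - s⟫ : ℝ) = - ⟪gradf (x k), s - x k⟫ := by
          rw [← inner_neg_right]
          congr 1
          abel
        rw [h6]
        linarith
      have e6 : 0 ≤ β k * ⟪gradf (x k), x k - s⟫ := mul_nonneg (hβpos k).le e5
      rw [e1, e2, e4]
      nlinarith
    have he : x (k+1) - s = (x k - s) - α k • (x k - PC (z k)) := by
      rw [hstep k]
      module
    have hexp : ‖x (k+1) - s‖ ^ 2 = ‖x k - s‖ ^ 2
        - 2 * (α k * ⟪x k - s, x k - PC (z k)⟫)
        + α k ^ 2 * ‖x k - PC (z k)‖ ^ 2 := by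
      rw [he, norm_sub_sq_real, real_inner_smul_right, norm_smul, Real.norm_eq_abs,
        abs_of_nonneg (hα0 k).le, mul_pow]
      try ring
    rw [hexp]
    have p1 : 0 ≤ (2 * α k) * ((⟪x k - s, x k - PC (z k)⟫ : ℝ)
        - ‖x k - PC (z k)‖ ^ 2 + β k * ⟪gradf (x k), x k - PC (z k)⟫) := by
      apply mul_nonneg (by linarith [hα0 k])
      linarith [hkey]
    have p2 : 0 ≤ (2 * α k - α k ^ 2) * ‖x k - PC (z k)‖ ^ 2 := by
      apply mul_nonneg _ (sq_nonneg _)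
      nlinarith [hα0 k, hα1 k]
    have p3 : 0 ≤ (βhi - β k) * (α k * ⟪gradf (x k), x k - PC (z k)⟫) :=
      mul_nonneg (by linarith [(hβk k).2]) (hαγ0 k)
    nlinarith [p1, p2, p3]
  -- norm convergence for minimizers
  have hnormconv : ∀ s : H, s ∈ C → f s ≤ f xs →
      ∃ L : ℝ, Tendsto (fun k => ‖x k - s‖ ^ 2) atTop (𝓝 L) := by
    intro s hsC hsf
    exact aux_qf (fun k => ‖x k - s‖ ^ 2)
      (fun k => 2 * βhi * (α k * ⟪gradf (x k), x k - PC (z k)⟫))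
      (fun k => sq_nonneg _)
      (fun k => mul_nonneg (by positivity) (hαγ0 k))
      (hsumm.mul_left (2 * βhi))
      (hfej s hsC hsf)
  -- uniform bound on the sequence
  have hxbd : ∀ k, ‖x k - xs‖ ^ 2 ≤ ‖x 0 - xs‖ ^ 2 + 2 * βhi * E := by
    have key : ∀ k, ‖x k - xs‖ ^ 2 ≤ ‖x 0 - xs‖ ^ 2
        + 2 * βhi * ∑ i ∈ Finset.range k, (α i * ⟪gradf (x i), x i - PC (z i)⟫) := by
      intro k
      induction k with
      | zero => simp
      | succ n ih =>
        have h1 := hfej xs hxsC le_rfl n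
        rw [Finset.sum_range_succ]
        nlinarith [h1, ih]
    intro k
    have h2 := key k
    have h3 : (2 * βhi) * (∑ i ∈ Finset.range k, (α i * ⟪gradf (x i), x i - PC (z i)⟫))
        ≤ (2 * βhi) * E := mul_le_mul_of_nonneg_left (hEub k) (by positivity)
    nlinarith [h2, h3]
  set R1 : ℝ := ‖xs‖ + Real.sqrt (‖x 0 - xs‖ ^ 2 + 2 * βhi * E) with hR1
  have hxR1 : ∀ k, ‖x k‖ ≤ R1 := by
    intro k
    have h1 : ‖x k - xs‖ ≤ Real.sqrt (‖x 0 - xs‖ ^ 2 + 2 * βhi * E) := by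
      rw [← Real.sqrt_sq (norm_nonneg (x k - xs))]
      exact Real.sqrt_le_sqrt (hxbd k)
    calc ‖x k‖ = ‖xs + (x k - xs)‖ := by congr 1; abel
    _ ≤ ‖xs‖ + ‖x k - xs‖ := norm_add_le _ _
    _ ≤ R1 := by rw [hR1]; linarith
  obtain ⟨G, hG0, hG⟩ := aux_gradbound gradf hUC R1
  have hgxk : ∀ k, ‖gradf (x k)‖ ≤ G := fun k => hG _ (hxR1 k)
  have hvW : ∀ k, ‖x k - PC (z k)‖ ≤ βhi * G := by
    intro k
    rcases eq_or_lt_of_le (norm_nonneg (x k - PC (z k))) with h | h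
    · rw [← h]; positivity
    · have h1 : (⟪gradf (x k), x k - PC (z k)⟫ : ℝ) ≤ G * ‖x k - PC (z k)‖ := by
        calc (⟪gradf (x k), x k - PC (z k)⟫ : ℝ)
            ≤ ‖gradf (x k)‖ * ‖x k - PC (z k)‖ := real_inner_le_norm _ _
        _ ≤ G * ‖x k - PC (z k)‖ := mul_le_mul_of_nonneg_right (hgxk k) (norm_nonneg _)
      have h2 := hproj k
      have h3 : β k * (⟪gradf (x k), x k - PC (z k)⟫ : ℝ)
          ≤ β k * (G * ‖x k - PC (z k)‖) := mul_le_mul_of_nonneg_left h1 (hβpos k).le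
      have h4 : β k * (G * ‖x k - PC (z k)‖) ≤ βhi * (G * ‖x k - PC (z k)‖) :=
        mul_le_mul_of_nonneg_right (hβk k).2 (by positivity)
      have h5 : ‖x k - PC (z k)‖ * ‖x k - PC (z k)‖ ≤ (βhi * G) * ‖x k - PC (z k)‖ := by
        nlinarith [h2, h3, h4]
      exact le_of_mul_le_mul_right h5 h
  -- the vanishing lemma
  have hvan : ∀ ε : ℝ, 0 < ε → ∃ k, ‖x k - PC (z k)‖ ≤ ε := by
    intro ε hε
    by_contra hcon
    push_neg at hcon
    have hε'0 : 0 < ε ^ 2 / βhi := by positivity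
    have hγlb : ∀ k, ε ^ 2 / βhi < ⟪gradf (x k), x k - PC (z k)⟫ := by
      intro k
      rw [div_lt_iff₀ hβhi0]
      have h1 := hproj k
      have h2 := hcon k
      have ha : ε ^ 2 < ‖x k - PC (z k)‖ ^ 2 := by nlinarith [h2, hε]
      have hb := mul_le_mul_of_nonneg_right (hβk k).2 (hγ0 k)
      linarith [ha, h1, hb]
    have hterm : Tendsto (fun k => α k * ⟪gradf (x k), x k - PC (z k)⟫) atTop (𝓝 0) :=
      hsumm.tendsto_atTop_zero
    have hαto0 : Tendsto α atTop (𝓝 0) := by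
      have hdiv : Tendsto (fun k => (α k * ⟪gradf (x k), x k - PC (z k)⟫) / (ε ^ 2 / βhi))
          atTop (𝓝 0) := by
        simpa using hterm.div_const (ε ^ 2 / βhi)
      refine squeeze_zero (fun k => (hα0 k).le) (fun k => ?_) hdiv
      rw [le_div_iff₀ hε'0]
      exact mul_le_mul_of_nonneg_left (hγlb k).le (hα0 k).le
    set W : ℝ := βhi * G with hW
    have hW0 : 0 ≤ W := by positivity
    have h1δ : (0:ℝ) < 1 - δ := by linarith
    set εU : ℝ := (1 - δ) * (ε ^ 2 / βhi) / (2 * (W + 1)) with hεU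
    have hεU0 : 0 < εU := by positivity
    obtain ⟨η, hη0, hηB⟩ := hUC (Metric.closedBall 0 (R1 + W)) Metric.isBounded_closedBall
      εU hεU0
    have hminpos : (0:ℝ) < min 1 (θ * η / (W + 1)) := lt_min one_pos (by positivity)
    have hev : ∀ᶠ k in atTop, α k < min 1 (θ * η / (W + 1)) :=
      hαto0.eventually_lt_const hminpos
    obtain ⟨k, hk⟩ := hev.exists
    have hk1 : α k < 1 := lt_of_lt_of_le hk (min_le_left _ _)
    have hk2 : α k < θ * η / (W + 1) := lt_of_lt_of_le hk (min_le_right _ _)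
    have hjk : 1 ≤ j k := by
      by_contra hj
      push_neg at hj
      have hj0 : j k = 0 := by omega
      rw [hα k, hj0, pow_zero] at hk1
      exact lt_irrefl 1 hk1
    set t : ℝ := θ ^ (j k - 1) with htdef
    have ht0 : 0 < t := pow_pos θ0 _
    have ht1 : t ≤ 1 := pow_le_one₀ θ0.le θ1.le
    have htα : t * θ = α k := by
      rw [htdef, hα k, ← pow_succ]
      congr 1
      omega
    have hmin := hjmin k (j k - 1) (by omega)
    push_neg at hmin
    rw [← htdef] at hmin
    have hyeq : x k - (t • PC (z k) + (1 - t) • x k) = t • (x k - PC (z k)) := by module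
    have hsub2 := subgrad (t • PC (z k) + (1 - t) • x k) (x k)
    rw [hyeq, real_inner_smul_right] at hsub2
    have hIneq : (⟪gradf (t • PC (z k) + (1 - t) • x k), x k - PC (z k)⟫ : ℝ)
        < δ * ⟪gradf (x k), x k - PC (z k)⟫ := by
      have hcomb : t * ⟪gradf (t • PC (z k) + (1 - t) • x k), x k - PC (z k)⟫
          < t * (δ * ⟪gradf (x k), x k - PC (z k)⟫) := by
        linarith [hsub2, hmin]
      exact lt_of_mul_lt_mul_left hcomb ht0.le
    have h9 : ‖PC (z k) - x k‖ ≤ W := by rw [norm_sub_rev]; exact hvW k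
    have hxball : x k ∈ Metric.closedBall (0:H) (R1 + W) := by
      simp only [Metric.mem_closedBall, dist_zero_right]
      linarith [hxR1 k]
    have hyball : (t • PC (z k) + (1 - t) • x k) ∈ Metric.closedBall (0:H) (R1 + W) := by
      have he2 : t • PC (z k) + (1 - t) • x k = x k + t • (PC (z k) - x k) := by module
      rw [he2]
      simp only [Metric.mem_closedBall, dist_zero_right]
      have h8 : ‖x k + t • (PC (z k) - x k)‖ ≤ ‖x k‖ + t * ‖PC (z k) - x k‖ := by
        calc ‖x k + t • (PC (z k) - x k)‖ ≤ ‖x k‖ + ‖t • (PC (z k) - x k)‖ := norm_add_le _ _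
        _ = ‖x k‖ + t * ‖PC (z k) - x k‖ := by
            rw [norm_smul, Real.norm_eq_abs, abs_of_pos ht0]
      have h8b : t * ‖PC (z k) - x k‖ ≤ W := by
        calc t * ‖PC (z k) - x k‖ ≤ t * W := mul_le_mul_of_nonneg_left h9 ht0.le
        _ ≤ 1 * W := mul_le_mul_of_nonneg_right ht1 hW0
        _ = W := one_mul W
      linarith [h8, hxR1 k, h8b]
    have hdist : ‖(t • PC (z k) + (1 - t) • x k) - x k‖ < η := by
      have he2 : (t • PC (z k) + (1 - t) • x k) - x k = t • (PC (z k) - x k) := by module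
      rw [he2, norm_smul, Real.norm_eq_abs, abs_of_pos ht0]
      have h10 : t * (W + 1) < η := by
        have h11 : t * θ < θ * η / (W + 1) := htα ▸ hk2
        rw [lt_div_iff₀ (by positivity : (0:ℝ) < W + 1)] at h11
        nlinarith [θ0, h11]
      calc t * ‖PC (z k) - x k‖ ≤ t * W := mul_le_mul_of_nonneg_left h9 ht0.le
      _ < η := by linarith [h10, ht0]
    have hΔ := hηB _ hyball _ hxball hdist
    have hinner : |(⟪gradf (t • PC (z k) + (1 - t) • x k) - gradf (x k), x k - PC (z k)⟫ : ℝ)|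
        ≤ εU * W := by
      calc |(⟪gradf (t • PC (z k) + (1 - t) • x k) - gradf (x k), x k - PC (z k)⟫ : ℝ)|
          ≤ ‖gradf (t • PC (z k) + (1 - t) • x k) - gradf (x k)‖ * ‖x k - PC (z k)‖ :=
            abs_real_inner_le_norm _ _
      _ ≤ εU * W := mul_le_mul hΔ.le (hvW k) (norm_nonneg _) hεU0.le
    have hsplit : (⟪gradf (t • PC (z k) + (1 - t) • x k), x k - PC (z k)⟫ : ℝ)
        = ⟪gradf (x k), x k - PC (z k)⟫
          + ⟪gradf (t • PC (z k) + (1 - t) • x k) - gradf (x k), x k - PC (z k)⟫ := by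
      rw [inner_sub_left]
      ring
    have habs := abs_le.mp hinner
    have hfin : (1 - δ) * ⟪gradf (x k), x k - PC (z k)⟫ ≤ εU * W := by
      rw [hsplit] at hIneq
      linarith [hIneq, habs.1]
    have hεU2 : εU * (2 * (W + 1)) = (1 - δ) * (ε ^ 2 / βhi) := by
      rw [hεU]
      field_simp
    have hst := mul_lt_mul_of_pos_left (hγlb k) h1δ
    linarith [hfin, hst, hεU2, hεU0.le, mul_pos h1δ hε'0, mul_nonneg hεU0.le hW0]
  -- limit of f (x k)
  have hbddb : BddBelow (Set.range fun k => f (x k)) := by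
    refine ⟨f xs, ?_⟩
    rintro r ⟨k, rfl⟩
    exact hlow k
  have hFlim : Tendsto (fun k => f (x k)) atTop (𝓝 (⨅ k, f (x k))) :=
    tendsto_atTop_ciInf (fun a b h => hfanti b a h) hbddb
  set F : ℝ := ⨅ k, f (x k) with hFdef
  have hFle : ∀ k, F ≤ f (x k) := fun k => ciInf_le hbddb k
  have hW0 : (0:ℝ) ≤ βhi * G := by positivity
  have hFxs : F ≤ f xs := by
    by_contra hcon
    push_neg at hcon
    set c : ℝ := G + (R1 + βhi * G + ‖xs‖) / βlo with hc
    have hc0 : 0 ≤ c := by positivity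
    obtain ⟨k, hk⟩ := hvan ((F - f xs) / (2 * (c + 1)))
      (div_pos (by linarith) (by positivity))
    -- f (x k) - f xs ≤ c * ‖v k‖
    have hkey : f (x k) - f xs ≤ c * ‖x k - PC (z k)‖ := by
      have h1 := subgrad (x k) xs
      -- ⟪gradf (x k), xs - x k⟫ ≤ f xs - f (x k)
      have h2 : f (x k) - f xs ≤ (⟪gradf (x k), x k - PC (z k)⟫ : ℝ)
          + ⟪gradf (x k), PC (z k) - xs⟫ := by
        have h3 : (⟪gradf (x k), x k - PC (z k)⟫ : ℝ) + ⟪gradf (x k), PC (z k) - xs⟫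
            = - ⟪gradf (x k), xs - x k⟫ := by
          rw [← inner_add_right, ← inner_neg_right]
          congr 1
          abel
        rw [h3]
        linarith [h1]
      have h4 : (⟪gradf (x k), x k - PC (z k)⟫ : ℝ) ≤ G * ‖x k - PC (z k)‖ := by
        calc (⟪gradf (x k), x k - PC (z k)⟫ : ℝ)
            ≤ ‖gradf (x k)‖ * ‖x k - PC (z k)‖ := real_inner_le_norm _ _
        _ ≤ G * ‖x k - PC (z k)‖ := mul_le_mul_of_nonneg_right (hgxk k) (norm_nonneg _)
      -- bound the second term
      have h5 : β k * (⟪gradf (x k), PC (z k) - xs⟫ : ℝ)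
          ≤ ‖x k - PC (z k)‖ * (R1 + βhi * G + ‖xs‖) := by
        have e1 : β k * (⟪gradf (x k), PC (z k) - xs⟫ : ℝ)
            = ⟪x k - PC (z k), PC (z k) - xs⟫ + ⟪z k - PC (z k), xs - PC (z k)⟫ := by
          rw [← real_inner_smul_left]
          have e2 : β k • gradf (x k) = (x k - PC (z k)) + (PC (z k) - z k) := by
            rw [hz k]
            abel
          rw [e2, inner_add_left]
          have e3 : (⟪PC (z k) - z k, PC (z k) - xs⟫ : ℝ)
              = ⟪z k - PC (z k), xs - PC (z k)⟫ := by
            rw [← inner_neg_neg]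
            congr 1 <;> abel
          rw [e3]
        have e4 : (⟪z k - PC (z k), xs - PC (z k)⟫ : ℝ) ≤ 0 := (hPC (z k)).2 xs hxsC
        have e5 : (⟪x k - PC (z k), PC (z k) - xs⟫ : ℝ)
            ≤ ‖x k - PC (z k)‖ * (R1 + βhi * G + ‖xs‖) := by
          calc (⟪x k - PC (z k), PC (z k) - xs⟫ : ℝ)
              ≤ ‖x k - PC (z k)‖ * ‖PC (z k) - xs‖ := real_inner_le_norm _ _
          _ ≤ ‖x k - PC (z k)‖ * (R1 + βhi * G + ‖xs‖) := by
              apply mul_le_mul_of_nonneg_left _ (norm_nonneg _)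
              have e6 : PC (z k) - xs = (x k - xs) - (x k - PC (z k)) := by abel
              rw [e6]
              calc ‖(x k - xs) - (x k - PC (z k))‖
                  ≤ ‖x k - xs‖ + ‖x k - PC (z k)‖ := norm_sub_le _ _
              _ ≤ (‖x k‖ + ‖xs‖) + βhi * G := by
                  have := norm_sub_le (x k) xs
                  have := hvW k
                  linarith
              _ ≤ R1 + βhi * G + ‖xs‖ := by linarith [hxR1 k]
        rw [e1]
        linarith [e4, e5]
      have h6 : (⟪gradf (x k), PC (z k) - xs⟫ : ℝ)
          ≤ ‖x k - PC (z k)‖ * (R1 + βhi * G + ‖xs‖) / βlo := by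
        rcases le_or_gt (⟪gradf (x k), PC (z k) - xs⟫ : ℝ) 0 with hneg | hpos
        · exact hneg.trans (by positivity)
        · rw [le_div_iff₀ hβlo]
          have hbb : (⟪gradf (x k), PC (z k) - xs⟫ : ℝ) * βlo
              ≤ (⟪gradf (x k), PC (z k) - xs⟫ : ℝ) * β k :=
            mul_le_mul_of_nonneg_left (hβk k).1 hpos.le
          linarith [h5, hbb]
      calc f (x k) - f xs ≤ (⟪gradf (x k), x k - PC (z k)⟫ : ℝ)
          + ⟪gradf (x k), PC (z k) - xs⟫ := h2
      _ ≤ G * ‖x k - PC (z k)‖ + ‖x k - PC (z k)‖ * (R1 + βhi * G + ‖xs‖) / βlo := by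
          linarith [h4, h6]
      _ = c * ‖x k - PC (z k)‖ := by rw [hc]; ring
    have h9 : F ≤ f (x k) := hFle k
    have h10 : c * ‖x k - PC (z k)‖ ≤ c * ((F - f xs) / (2 * (c + 1))) :=
      mul_le_mul_of_nonneg_left hk hc0
    have h11 : c * ((F - f xs) / (2 * (c + 1))) * (2 * (c + 1)) = c * (F - f xs) := by
      field_simp
    have hd : 0 < F - f xs := sub_pos.mpr hcon
    have h12 : F - f xs ≤ c * ((F - f xs) / (2 * (c + 1))) := by
      have h12a : F - f xs ≤ c * ‖x k - PC (z k)‖ := by linarith [h9, hkey]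
      exact h12a.trans h10
    have h14 : (F - f xs) * (2 * (c + 1)) ≤ c * (F - f xs) := by
      calc (F - f xs) * (2 * (c + 1))
          ≤ (c * ((F - f xs) / (2 * (c + 1)))) * (2 * (c + 1)) :=
        mul_le_mul_of_nonneg_right h12 (by positivity)
      _ = c * (F - f xs) := h11
    nlinarith [h14, hd, mul_nonneg hc0 hd.le]
  -- the weak-cluster-point claim
  have claim : ∀ V : Ultrafilter ℕ, (V : Filter ℕ) ≤ atTop → ∀ q : H,
      (∀ y : H, Tendsto (fun k => ⟪x k, y⟫) (V : Filter ℕ) (𝓝 ⟪q, y⟫)) →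
      q ∈ C ∧ f q ≤ f xs := by
    intro V hV q hq
    have hqC : q ∈ C := by
      have h1 : ∀ k, (⟪x k, q - PC q⟫ : ℝ) ≤ ⟪PC q, q - PC q⟫ := by
        intro k
        have h2 := (hPC q).2 (x k) (hxC k)
        have h3 : (⟪q - PC q, x k - PC q⟫ : ℝ)
            = ⟪x k, q - PC q⟫ - ⟪PC q, q - PC q⟫ := by
          rw [real_inner_comm, inner_sub_left]
        linarith [h2, h3.symm.trans_le h2]
      have h4 : (⟪q, q - PC q⟫ : ℝ) ≤ ⟪PC q, q - PC q⟫ :=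
        le_of_tendsto (hq (q - PC q)) (Eventually.of_forall h1)
      have h5 : (⟪q - PC q, q - PC q⟫ : ℝ) ≤ 0 := by
        rw [inner_sub_left]
        linarith
      have h6 : q - PC q = 0 := real_inner_self_nonpos.mp h5
      have h7 : q = PC q := by rwa [sub_eq_zero] at h6
      rw [h7]
      exact (hPC q).1
    refine ⟨hqC, ?_⟩
    have h7 : ∀ k, (0:ℝ) ≤ f (x k) - f q - ((⟪x k, gradf q⟫ : ℝ) - ⟪q, gradf q⟫) := by
      intro k
      have h8 := subgrad q (x k)
      have h9 : (⟪gradf q, x k - q⟫ : ℝ) = ⟪x k, gradf q⟫ - ⟪q, gradf q⟫ := by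
        rw [inner_sub_right, real_inner_comm (gradf q) (x k), real_inner_comm (gradf q) q]
      linarith [h9 ▸ h8]
    have hlim2 : Tendsto (fun k => f (x k) - f q - ((⟪x k, gradf q⟫ : ℝ) - ⟪q, gradf q⟫))
        (V : Filter ℕ) (𝓝 (F - f q - ((⟪q, gradf q⟫ : ℝ) - ⟪q, gradf q⟫))) :=
      (((hFlim.mono_left hV).sub tendsto_const_nhds).sub
        ((hq (gradf q)).sub tendsto_const_nhds))
    have h10 := ge_of_tendsto hlim2 (Eventually.of_forall h7)
    have h11 : f q ≤ F := by linarith [h10]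
    linarith [h11, hFxs]
  -- construct the weak limit p
  have hUne : (atTop : Filter ℕ).NeBot := atTop_neBot
  set U : Ultrafilter ℕ := Ultrafilter.of atTop with hUdef
  have hUle : (U : Filter ℕ) ≤ atTop := Ultrafilter.of_le _
  obtain ⟨p, hp⟩ := aux_weaklim U x R1 hxR1
  obtain ⟨hpC, hpf⟩ := claim U hUle p hp
  refine ⟨p, ⟨hpC, fun y hy => le_trans hpf (hxsmin y hy)⟩, ?_⟩
  intro y
  by_contra hcon
  rw [Metric.tendsto_atTop] at hcon
  push_neg at hcon
  obtain ⟨ε, hε0, hεfr⟩ := hcon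
  have hfreq : ∃ᶠ n in atTop, ε ≤ dist (⟪x n, y⟫ : ℝ) ⟪p, y⟫ := by
    rw [frequently_atTop]
    intro a
    obtain ⟨n, hn1, hn2⟩ := hεfr a
    exact ⟨n, hn1, hn2⟩
  haveI hne : (atTop ⊓ 𝓟 {n : ℕ | ε ≤ dist (⟪x n, y⟫ : ℝ) ⟪p, y⟫}).NeBot :=
    frequently_iff_neBot.mp hfreq
  set V : Ultrafilter ℕ := Ultrafilter.of (atTop ⊓ 𝓟 {n : ℕ | ε ≤ dist (⟪x n, y⟫ : ℝ) ⟪p, y⟫})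
    with hVdef
  have hVle0 : (V : Filter ℕ) ≤ atTop ⊓ 𝓟 {n : ℕ | ε ≤ dist (⟪x n, y⟫ : ℝ) ⟪p, y⟫} :=
    Ultrafilter.of_le _
  have hVle : (V : Filter ℕ) ≤ atTop := hVle0.trans inf_le_left
  have hVset : ∀ᶠ n in (V : Filter ℕ), ε ≤ dist (⟪x n, y⟫ : ℝ) ⟪p, y⟫ :=
    hVle0.trans inf_le_right (mem_principal_self _)
  obtain ⟨q, hq⟩ := aux_weaklim V x R1 hxR1
  obtain ⟨hqC, hqf⟩ := claim V hVle q hq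
  have hdq : ε ≤ dist (⟪q, y⟫ : ℝ) ⟪p, y⟫ :=
    ge_of_tendsto ((hq y).dist tendsto_const_nhds) hVset
  -- Opial argument
  obtain ⟨a, ha⟩ := hnormconv p hpC hpf
  obtain ⟨b, hb⟩ := hnormconv q hqC hqf
  have hiden : ∀ k, (⟪x k, p - q⟫ : ℝ)
      = (‖x k - q‖ ^ 2 - ‖x k - p‖ ^ 2 - ‖q‖ ^ 2 + ‖p‖ ^ 2) / 2 := by
    intro k
    rw [inner_sub_right, norm_sub_sq_real, norm_sub_sq_real]
    ring
  have hcfull : Tendsto (fun k => (⟪x k, p - q⟫ : ℝ)) atTop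
      (𝓝 ((b - a - ‖q‖ ^ 2 + ‖p‖ ^ 2) / 2)) := by
    simp_rw [hiden]
    exact (((hb.sub ha).sub tendsto_const_nhds).add tendsto_const_nhds).div_const 2
  have h1 : (⟪p, p - q⟫ : ℝ) = (b - a - ‖q‖ ^ 2 + ‖p‖ ^ 2) / 2 :=
    tendsto_nhds_unique (hp (p - q)) (hcfull.mono_left hUle)
  have h2 : (⟪q, p - q⟫ : ℝ) = (b - a - ‖q‖ ^ 2 + ‖p‖ ^ 2) / 2 :=
    tendsto_nhds_unique (hq (p - q)) (hcfull.mono_left hVle)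
  have h3 : (⟪p - q, p - q⟫ : ℝ) = 0 := by
    rw [inner_sub_left]
    linarith
  have h4 : p - q = 0 := inner_self_eq_zero.mp h3
  have h5 : q = p := by
    have := sub_eq_zero.mp h4
    exact this.symm
  rw [h5] at hdq
  simp only [dist_self] at hdq
  linarith
end

section
/- Assume S_* ≠ ∅. Then along Algorithm A2, for every k, ‖∇f(x^k)‖ · ‖x^k − x^{k+1}‖ ≥ f(x^k) − f^lev_k ≥ δ (α_k/β̂) ‖x^k − P_C(z^k)‖² ≥ 0. -/
open Filter
open scoped RealInnerProductSpace

theorem stmt_10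
    {H : Type*} [NormedAddCommGroup H] [InnerProductSpace ℝ H] [CompleteSpace H]
    (C : Set H) (hCne : C.Nonempty) (hCcl : IsClosed C) (hCcv : Convex ℝ C)
    (f : H → ℝ) (hf : ConvexOn ℝ Set.univ f)
    (gradf : H → H)
    (hgrad : ∀ x d : H,
      Tendsto (fun t : ℝ => (f (x + t • d) - f x) / t) (nhdsWithin 0 (Set.Ioi 0))
        (nhds ⟪gradf x, d⟫))
    (PC : H → H)
    (hPC : ∀ x : H, PC x ∈ C ∧ ∀ z ∈ C, ⟪x - PC x, z - PC x⟫ ≤ 0)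
    (θ δ βlo βhi : ℝ)
    (hθ : θ ∈ Set.Ioo (0:ℝ) 1) (hδ : δ ∈ Set.Ioo (0:ℝ) 1)
    (hβlo : 0 < βlo) (hββ : βlo ≤ βhi)
    (β : ℕ → ℝ) (hβk : ∀ k, β k ∈ Set.Icc βlo βhi)
    (x z : ℕ → H) (α : ℕ → ℝ) (j : ℕ → ℕ)
    (hx0 : x 0 ∈ C)
    (hz : ∀ k, z k = x k - β k • gradf (x k))
    (hjA : ∀ k, f ((θ ^ j k) • PC (z k) + (1 - θ ^ j k) • x k)
        ≤ f (x k) - δ * θ ^ j k * ⟪gradf (x k), x k - PC (z k)⟫)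
    (hjmin : ∀ k, ∀ i < j k, ¬ (f ((θ ^ i) • PC (z k) + (1 - θ ^ i) • x k)
        ≤ f (x k) - δ * θ ^ i * ⟪gradf (x k), x k - PC (z k)⟫))
    (hα : ∀ k, α k = θ ^ j k)
    (flev : ℕ → ℝ)
    (hflev0 : flev 0 = f ((θ ^ j 0) • PC (z 0) + (1 - θ ^ j 0) • x 0))
    (hflevS : ∀ k, flev (k+1) =
        min (flev k) (f ((θ ^ j (k+1)) • PC (z (k+1)) + (1 - θ ^ j (k+1)) • x (k+1))))
    (hstep : ∀ k,
      (x (k+1) ∈ C ∧ ⟪x (k+1) - x k, x 0 - x k⟫ ≤ 0 ∧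
        ⟪gradf (x k), x (k+1) - x k⟫ + f (x k) - flev k ≤ 0) ∧
      ∀ y : H, y ∈ C → ⟪y - x k, x 0 - x k⟫ ≤ 0 →
        ⟪gradf (x k), y - x k⟫ + f (x k) - flev k ≤ 0 →
        ‖x (k+1) - x 0‖ ≤ ‖y - x 0‖)
    (hS : ∃ xs ∈ C, ∀ y ∈ C, f xs ≤ f y)
    : ∀ k, ‖gradf (x k)‖ * ‖x k - x (k+1)‖ ≥ f (x k) - flev k ∧
      f (x k) - flev k ≥ δ * (α k / βhi) * ‖x k - PC (z k)‖ ^ 2 ∧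
      δ * (α k / βhi) * ‖x k - PC (z k)‖ ^ 2 ≥ 0 := by
  have hβhipos : (0:ℝ) < βhi := lt_of_lt_of_le hβlo hββ
  have hxC : ∀ k, x k ∈ C := by
    intro k; cases k with
    | zero => exact hx0
    | succ n => exact ((hstep n).1).1
  have hflevle : ∀ k, flev k ≤ f ((θ ^ j k) • PC (z k) + (1 - θ ^ j k) • x k) := by
    intro k; cases k with
    | zero => exact hflev0.le
    | succ n => rw [hflevS n]; exact min_le_right _ _
  intro k
  set g := gradf (x k) with hg
  set d := x k - PC (z k) with hd
  have hproj : ⟪z k - PC (z k), x k - PC (z k)⟫ ≤ 0 := (hPC (z k)).2 (x k) (hxC k)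
  have h1eq : z k - PC (z k) = d - β k • g := by
    nth_rewrite 1 [hz k]; rw [hd, hg]; abel
  rw [h1eq, ← hd, inner_sub_left, real_inner_smul_left, real_inner_self_eq_norm_sq] at hproj
  have hinner : ‖d‖ ^ 2 ≤ β k * ⟪g, d⟫ := by linarith
  have hβ := hβk k
  have hβpos : 0 < β k := lt_of_lt_of_le hβlo hβ.1
  have hI : 0 ≤ ⟪g, d⟫ := by nlinarith [sq_nonneg ‖d‖]
  have hIb : ‖d‖ ^ 2 ≤ βhi * ⟪g, d⟫ := by
    nlinarith [mul_le_mul_of_nonneg_right hβ.2 hI]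
  have hθj : (0:ℝ) < θ ^ j k := pow_pos hθ.1 _
  have hδ0 : (0:ℝ) < δ := hδ.1
  have key : δ * (θ ^ j k / βhi) * ‖d‖ ^ 2 ≤ δ * θ ^ j k * ⟪g, d⟫ := by
    rw [show δ * (θ ^ j k / βhi) * ‖d‖ ^ 2 = δ * θ ^ j k * ‖d‖ ^ 2 / βhi by ring,
      div_le_iff₀ hβhipos]
    nlinarith [mul_le_mul_of_nonneg_left hIb (by positivity : (0:ℝ) ≤ δ * θ ^ j k)]
  have h1 := ((hstep k).1).2.2
  have hcs := real_inner_le_norm g (x k - x (k+1))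
  have heq : ⟪g, x k - x (k+1)⟫ = -⟪g, x (k+1) - x k⟫ := by
    rw [← inner_neg_right, neg_sub]
  rw [heq] at hcs
  refine ⟨by linarith, ?_, ?_⟩
  · rw [hα k]
    have := hjA k
    have := hflevle k
    rw [← hg, ← hd] at *
    linarith
  · rw [hα k]; positivity
end

section
/- Assume S_* ≠ ∅. Then along Algorithm A2, for every k one has S_* ⊆ C ∩ H_k ∩ W_k; in particular C ∩ H_k ∩ W_k is nonempty, closed and convex, so the iterate x^{k+1} = P_{C ∩ W_k ∩ H_k}(x^0) is well defined. -/
open Filter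
open scoped RealInnerProductSpace

lemma var_ineq' {H : Type*} [NormedAddCommGroup H] [InnerProductSpace ℝ H]
    {S : Set H} (hS : Convex ℝ S) {p x0 : H} (hp : p ∈ S)
    (hmin : ∀ y ∈ S, ‖p - x0‖ ≤ ‖y - x0‖) {y : H} (hy : y ∈ S) :
    ⟪y - p, x0 - p⟫ ≤ 0 := by
  have key : ∀ t : ℝ, t ∈ Set.Ioo (0:ℝ) 1 →
      0 ≤ 2 * ⟪p - x0, y - p⟫ + t * ‖y - p‖ ^ 2 := by
    intro t ht
    have hq : p + t • (y - p) ∈ S := by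
      have h := hS hp hy (by linarith [ht.2] : (0:ℝ) ≤ 1 - t) ht.1.le (by ring)
      have e : (1 - t) • p + t • y = p + t • (y - p) := by module
      rwa [e] at h
    have h1 := hmin _ hq
    have h2 : ‖p - x0‖ ^ 2 ≤ ‖p + t • (y - p) - x0‖ ^ 2 := by
      have := pow_le_pow_left₀ (norm_nonneg _) h1 2
      exact this
    have e2 : p + t • (y - p) - x0 = (p - x0) + t • (y - p) := by abel
    rw [e2, norm_add_sq_real, real_inner_smul_right, norm_smul, Real.norm_eq_abs,
      abs_of_pos ht.1] at h2
    nlinarith [h2, ht.1]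
  have hlim : Tendsto (fun t : ℝ => 2 * ⟪p - x0, y - p⟫ + t * ‖y - p‖ ^ 2)
      (nhdsWithin 0 (Set.Ioi 0)) (nhds (2 * ⟪p - x0, y - p⟫)) := by
    have : Tendsto (fun t : ℝ => 2 * ⟪p - x0, y - p⟫ + t * ‖y - p‖ ^ 2)
        (nhds 0) (nhds (2 * ⟪p - x0, y - p⟫ + 0 * ‖y - p‖ ^ 2)) := by
      exact (continuous_const.add (continuous_id.mul continuous_const)).tendsto 0
    simpa using this.mono_left nhdsWithin_le_nhds
  have h0 : 0 ≤ 2 * ⟪p - x0, y - p⟫ := by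
    refine ge_of_tendsto hlim ?_
    filter_upwards [Ioo_mem_nhdsGT_of_mem (Set.left_mem_Ico.2 one_pos)] with t ht
    exact key t ht
  have : ⟪y - p, x0 - p⟫ = -⟪p - x0, y - p⟫ := by
    rw [real_inner_comm, show x0 - p = -(p - x0) from (neg_sub _ _).symm, inner_neg_left]
  linarith

theorem stmt_11
    {H : Type*} [NormedAddCommGroup H] [InnerProductSpace ℝ H] [CompleteSpace H]
    (C : Set H) (hCne : C.Nonempty) (hCcl : IsClosed C) (hCcv : Convex ℝ C)
    (f : H → ℝ) (hf : ConvexOn ℝ Set.univ f)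
    (gradf : H → H)
    (hgrad : ∀ x d : H,
      Tendsto (fun t : ℝ => (f (x + t • d) - f x) / t) (nhdsWithin 0 (Set.Ioi 0))
        (nhds ⟪gradf x, d⟫))
    (PC : H → H)
    (hPC : ∀ x : H, PC x ∈ C ∧ ∀ z ∈ C, ⟪x - PC x, z - PC x⟫ ≤ 0)
    (θ δ βlo βhi : ℝ)
    (hθ : θ ∈ Set.Ioo (0:ℝ) 1) (hδ : δ ∈ Set.Ioo (0:ℝ) 1)
    (hβlo : 0 < βlo) (hββ : βlo ≤ βhi)
    (β : ℕ → ℝ) (hβk : ∀ k, β k ∈ Set.Icc βlo βhi)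
    (x z : ℕ → H) (α : ℕ → ℝ) (j : ℕ → ℕ)
    (hx0 : x 0 ∈ C)
    (hz : ∀ k, z k = x k - β k • gradf (x k))
    (hjA : ∀ k, f ((θ ^ j k) • PC (z k) + (1 - θ ^ j k) • x k)
        ≤ f (x k) - δ * θ ^ j k * ⟪gradf (x k), x k - PC (z k)⟫)
    (hjmin : ∀ k, ∀ i < j k, ¬ (f ((θ ^ i) • PC (z k) + (1 - θ ^ i) • x k)
        ≤ f (x k) - δ * θ ^ i * ⟪gradf (x k), x k - PC (z k)⟫))
    (hα : ∀ k, α k = θ ^ j k)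
    (flev : ℕ → ℝ)
    (hflev0 : flev 0 = f ((θ ^ j 0) • PC (z 0) + (1 - θ ^ j 0) • x 0))
    (hflevS : ∀ k, flev (k+1) =
        min (flev k) (f ((θ ^ j (k+1)) • PC (z (k+1)) + (1 - θ ^ j (k+1)) • x (k+1))))
    (hstep : ∀ k,
      (x (k+1) ∈ C ∧ ⟪x (k+1) - x k, x 0 - x k⟫ ≤ 0 ∧
        ⟪gradf (x k), x (k+1) - x k⟫ + f (x k) - flev k ≤ 0) ∧
      ∀ y : H, y ∈ C → ⟪y - x k, x 0 - x k⟫ ≤ 0 →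
        ⟪gradf (x k), y - x k⟫ + f (x k) - flev k ≤ 0 →
        ‖x (k+1) - x 0‖ ≤ ‖y - x 0‖)
    (hS : ∃ xs ∈ C, ∀ y ∈ C, f xs ≤ f y)
    : ∀ k, (∀ xs : H, xs ∈ C → (∀ y ∈ C, f xs ≤ f y) →
        xs ∈ {y : H | y ∈ C ∧ ⟪y - x k, x 0 - x k⟫ ≤ 0 ∧
        ⟪gradf (x k), y - x k⟫ + f (x k) - flev k ≤ 0}) ∧
      Set.Nonempty ({y : H | y ∈ C ∧ ⟪y - x k, x 0 - x k⟫ ≤ 0 ∧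
        ⟪gradf (x k), y - x k⟫ + f (x k) - flev k ≤ 0}) ∧
      IsClosed ({y : H | y ∈ C ∧ ⟪y - x k, x 0 - x k⟫ ≤ 0 ∧
        ⟪gradf (x k), y - x k⟫ + f (x k) - flev k ≤ 0}) ∧
      Convex ℝ ({y : H | y ∈ C ∧ ⟪y - x k, x 0 - x k⟫ ≤ 0 ∧
        ⟪gradf (x k), y - x k⟫ + f (x k) - flev k ≤ 0}) := by
  
  obtain ⟨xs0, hxs0C, hxs0min⟩ := hS
  have grad_le : ∀ (u d : H), ⟪gradf u, d⟫ ≤ f (u + d) - f u := by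
    intro u d
    refine le_of_tendsto (hgrad u d) ?_
    filter_upwards [Ioo_mem_nhdsGT_of_mem (Set.left_mem_Ico.2 one_pos)] with t ht
    have h1 : f (u + t • d) ≤ (1 - t) * f u + t * f (u + d) := by
      have h := hf.2 (Set.mem_univ u) (Set.mem_univ (u + d))
        (by linarith [ht.2] : (0:ℝ) ≤ 1 - t) ht.1.le (by ring)
      have e : (1 - t) • u + t • (u + d) = u + t • d := by module
      rw [e] at h
      simpa using h
    rw [div_le_iff₀ ht.1]
    nlinarith [ht.1]
  have hxC : ∀ k, x k ∈ C := by
    intro k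
    cases k with
    | zero => exact hx0
    | succ n => exact (hstep n).1.1
  have hfp : ∀ k, (θ ^ j k) • PC (z k) + (1 - θ ^ j k) • x k ∈ C := by
    intro k
    have h1 : (0:ℝ) ≤ θ ^ j k := pow_nonneg hθ.1.le _
    have h2 : θ ^ j k ≤ 1 := pow_le_one₀ hθ.1.le hθ.2.le
    exact hCcv (hPC (z k)).1 (hxC k) h1 (by linarith) (by ring)
  have hflev : ∀ k, f xs0 ≤ flev k := by
    intro k
    induction k with
    | zero => rw [hflev0]; exact hxs0min _ (hfp 0)
    | succ n ih => rw [hflevS n]; exact le_min ih (hxs0min _ (hfp (n+1)))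
  have hH : ∀ k (xs : H), xs ∈ C → (∀ y ∈ C, f xs ≤ f y) →
      ⟪gradf (x k), xs - x k⟫ + f (x k) - flev k ≤ 0 := by
    intro k xs hxsC hxsmin
    have h1 := grad_le (x k) (xs - x k)
    have e : x k + (xs - x k) = xs := by abel
    rw [e] at h1
    have h2 : f xs ≤ f xs0 := hxsmin xs0 hxs0C
    linarith [hflev k]
  have hSconv : ∀ k, Convex ℝ {y : H | y ∈ C ∧ ⟪y - x k, x 0 - x k⟫ ≤ 0 ∧
      ⟪gradf (x k), y - x k⟫ + f (x k) - flev k ≤ 0} := by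
    intro k y1 hy1 y2 hy2 a b ha hb hab
    have hb' : b = 1 - a := by linarith
    subst hb'
    have e : a • y1 + (1 - a) • y2 - x k = a • (y1 - x k) + (1 - a) • (y2 - x k) := by
      module
    refine ⟨hCcv hy1.1 hy2.1 ha hb hab, ?_, ?_⟩
    · show ⟪a • y1 + (1 - a) • y2 - x k, x 0 - x k⟫ ≤ 0
      rw [e, inner_add_left, real_inner_smul_left, real_inner_smul_left]
      have h1 := mul_le_mul_of_nonneg_left hy1.2.1 ha
      have h2 := mul_le_mul_of_nonneg_left hy2.2.1 hb
      rw [mul_zero] at h1 h2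
      linarith
    · show ⟪gradf (x k), a • y1 + (1 - a) • y2 - x k⟫ + f (x k) - flev k ≤ 0
      rw [e, inner_add_right, real_inner_smul_right, real_inner_smul_right]
      have h1 : a * ⟪gradf (x k), y1 - x k⟫ ≤ a * (flev k - f (x k)) :=
        mul_le_mul_of_nonneg_left (by linarith [hy1.2.2]) ha
      have h2 : (1 - a) * ⟪gradf (x k), y2 - x k⟫ ≤ (1 - a) * (flev k - f (x k)) :=
        mul_le_mul_of_nonneg_left (by linarith [hy2.2.2]) hb
      have h3 : a * (flev k - f (x k)) + (1 - a) * (flev k - f (x k)) = flev k - f (x k) := by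
        ring
      linarith
  have hScl : ∀ k, IsClosed {y : H | y ∈ C ∧ ⟪y - x k, x 0 - x k⟫ ≤ 0 ∧
      ⟪gradf (x k), y - x k⟫ + f (x k) - flev k ≤ 0} := by
    intro k
    have h1 : Continuous fun y : H => ⟪y - x k, x 0 - x k⟫ :=
      (continuous_id.sub continuous_const).inner continuous_const
    have h2 : Continuous fun y : H => ⟪gradf (x k), y - x k⟫ + f (x k) - flev k :=
      ((continuous_const.inner (continuous_id.sub continuous_const)).add
        continuous_const).sub continuous_const
    have hset : {y : H | y ∈ C ∧ ⟪y - x k, x 0 - x k⟫ ≤ 0 ∧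
        ⟪gradf (x k), y - x k⟫ + f (x k) - flev k ≤ 0}
        = C ∩ ({y : H | ⟪y - x k, x 0 - x k⟫ ≤ 0} ∩
          {y : H | ⟪gradf (x k), y - x k⟫ + f (x k) - flev k ≤ 0}) := by
      rfl
    rw [hset]
    exact hCcl.inter ((isClosed_le h1 continuous_const).inter (isClosed_le h2 continuous_const))
  have hW : ∀ k (xs : H), xs ∈ C → (∀ y ∈ C, f xs ≤ f y) →
      ⟪xs - x k, x 0 - x k⟫ ≤ 0 := by
    intro k
    induction k with
    | zero => intro xs _ _; simp
    | succ n ih =>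
      intro xs hxsC hxsmin
      have hxsS : xs ∈ {y : H | y ∈ C ∧ ⟪y - x n, x 0 - x n⟫ ≤ 0 ∧
          ⟪gradf (x n), y - x n⟫ + f (x n) - flev n ≤ 0} :=
        ⟨hxsC, ih xs hxsC hxsmin, hH n xs hxsC hxsmin⟩
      have hpS : x (n+1) ∈ {y : H | y ∈ C ∧ ⟪y - x n, x 0 - x n⟫ ≤ 0 ∧
          ⟪gradf (x n), y - x n⟫ + f (x n) - flev n ≤ 0} :=
        ⟨(hstep n).1.1, (hstep n).1.2.1, (hstep n).1.2.2⟩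
      have hmin' : ∀ y ∈ {y : H | y ∈ C ∧ ⟪y - x n, x 0 - x n⟫ ≤ 0 ∧
          ⟪gradf (x n), y - x n⟫ + f (x n) - flev n ≤ 0},
          ‖x (n+1) - x 0‖ ≤ ‖y - x 0‖ := fun y hy => (hstep n).2 y hy.1 hy.2.1 hy.2.2
      exact var_ineq' (hSconv n) hpS hmin' hxsS
  intro k
  exact ⟨fun xs hxsC hxsmin => ⟨hxsC, hW k xs hxsC hxsmin, hH k xs hxsC hxsmin⟩,
    ⟨xs0, hxs0C, hW k xs0 hxs0C hxs0min, hH k xs0 hxs0C hxs0min⟩, hScl k, hSconv k⟩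
end

section
/- Assume S_* ≠ ∅ and let x_* = P_{S_*}(x^0) be the projection of x^0 onto S_* (S_* is nonempty, closed and convex). Then every iterate x^k of Algorithm A2 lies in the closed ball centered at (x^0 + x_*)/2 with radius ‖x_* − x^0‖/2, i.e. ‖x^k − (x^0 + x_*)/2‖ ≤ ‖x_* − x^0‖/2 for all k. -/
open Filter
open scoped RealInnerProductSpace

theorem stmt_12
    {H : Type*} [NormedAddCommGroup H] [InnerProductSpace ℝ H] [CompleteSpace H]
    (C : Set H) (hCne : C.Nonempty) (hCcl : IsClosed C) (hCcv : Convex ℝ C)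
    (f : H → ℝ) (hf : ConvexOn ℝ Set.univ f)
    (gradf : H → H)
    (hgrad : ∀ x d : H,
      Tendsto (fun t : ℝ => (f (x + t • d) - f x) / t) (nhdsWithin 0 (Set.Ioi 0))
        (nhds ⟪gradf x, d⟫))
    (PC : H → H)
    (hPC : ∀ x : H, PC x ∈ C ∧ ∀ z ∈ C, ⟪x - PC x, z - PC x⟫ ≤ 0)
    (θ δ βlo βhi : ℝ)
    (hθ : θ ∈ Set.Ioo (0:ℝ) 1) (hδ : δ ∈ Set.Ioo (0:ℝ) 1)
    (hβlo : 0 < βlo) (hββ : βlo ≤ βhi)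
    (β : ℕ → ℝ) (hβk : ∀ k, β k ∈ Set.Icc βlo βhi)
    (x z : ℕ → H) (α : ℕ → ℝ) (j : ℕ → ℕ)
    (hx0 : x 0 ∈ C)
    (hz : ∀ k, z k = x k - β k • gradf (x k))
    (hjA : ∀ k, f ((θ ^ j k) • PC (z k) + (1 - θ ^ j k) • x k)
        ≤ f (x k) - δ * θ ^ j k * ⟪gradf (x k), x k - PC (z k)⟫)
    (hjmin : ∀ k, ∀ i < j k, ¬ (f ((θ ^ i) • PC (z k) + (1 - θ ^ i) • x k)
        ≤ f (x k) - δ * θ ^ i * ⟪gradf (x k), x k - PC (z k)⟫))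
    (hα : ∀ k, α k = θ ^ j k)
    (flev : ℕ → ℝ)
    (hflev0 : flev 0 = f ((θ ^ j 0) • PC (z 0) + (1 - θ ^ j 0) • x 0))
    (hflevS : ∀ k, flev (k+1) =
        min (flev k) (f ((θ ^ j (k+1)) • PC (z (k+1)) + (1 - θ ^ j (k+1)) • x (k+1))))
    (hstep : ∀ k,
      (x (k+1) ∈ C ∧ ⟪x (k+1) - x k, x 0 - x k⟫ ≤ 0 ∧
        ⟪gradf (x k), x (k+1) - x k⟫ + f (x k) - flev k ≤ 0) ∧
      ∀ y : H, y ∈ C → ⟪y - x k, x 0 - x k⟫ ≤ 0 →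
        ⟪gradf (x k), y - x k⟫ + f (x k) - flev k ≤ 0 →
        ‖x (k+1) - x 0‖ ≤ ‖y - x 0‖)
    (hS : ∃ xs ∈ C, ∀ y ∈ C, f xs ≤ f y)
    (xstar : H) (hxsC : xstar ∈ C) (hxsmin : ∀ y ∈ C, f xstar ≤ f y)
    (hxsproj : ∀ y : H, y ∈ C → (∀ w ∈ C, f y ≤ f w) → ‖xstar - x 0‖ ≤ ‖y - x 0‖)
    : ∀ k, ‖x k - (2:ℝ)⁻¹ • (x 0 + xstar)‖ ≤ ‖xstar - x 0‖ / 2 := by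
  -- subgradient inequality from convexity and directional derivative
  have key : ∀ u v : H, ⟪gradf u, v - u⟫ ≤ f v - f u := by
    intro u v
    refine le_of_tendsto (hgrad u (v - u)) ?_
    have hmem : Set.Ioc (0:ℝ) 1 ∈ nhdsWithin (0:ℝ) (Set.Ioi 0) :=
      Ioc_mem_nhdsGT_of_mem (by constructor <;> norm_num)
    filter_upwards [hmem] with t ht
    have hcv := hf.2 (Set.mem_univ u) (Set.mem_univ v)
      (show (0:ℝ) ≤ 1 - t by linarith [ht.2]) ht.1.le
      (show (1 - t) + t = 1 by ring)
    have heq : (1 - t) • u + t • v = u + t • (v - u) := by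
      rw [smul_sub, sub_smul, one_smul]; abel
    rw [heq] at hcv
    simp only [smul_eq_mul] at hcv
    rw [div_le_iff₀ ht.1]
    nlinarith [hcv]
  -- iterates in C
  have hxC : ∀ k, x k ∈ C := by
    intro k; cases k with
    | zero => exact hx0
    | succ n => exact ((hstep n).1).1
  -- flev ≥ f xstar
  have hp : ∀ k, f xstar ≤ f ((θ ^ j k) • PC (z k) + (1 - θ ^ j k) • x k) := by
    intro k
    have h1 : (0:ℝ) ≤ θ ^ j k := pow_nonneg hθ.1.le _
    have h2 : θ ^ j k ≤ 1 := pow_le_one₀ hθ.1.le hθ.2.le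
    exact hxsmin _ (hCcv (hPC (z k)).1 (hxC k) h1 (by linarith) (by ring))
  have hlev : ∀ k, f xstar ≤ flev k := by
    intro k; induction k with
    | zero => rw [hflev0]; exact hp 0
    | succ n ih => rw [hflevS n]; exact le_min ih (hp (n+1))
  -- main induction: ⟪xstar - x k, x 0 - x k⟫ ≤ 0
  have main : ∀ k, ⟪xstar - x k, x 0 - x k⟫ ≤ 0 := by
    intro k; induction k with
    | zero => simp
    | succ n ih =>
      -- xstar satisfies the H_n constraint
      have hHs : ⟪gradf (x n), xstar - x n⟫ + f (x n) - flev n ≤ 0 := by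
        have := key (x n) xstar
        have := hlev n
        linarith
      obtain ⟨⟨hC1, hW1, hH1⟩, hmin⟩ := hstep n
      -- for t ∈ (0,1], the point y t is feasible
      have hfeas : ∀ t : ℝ, 0 < t → t ≤ 1 →
          ‖x (n+1) - x 0‖ ≤ ‖(1 - t) • x (n+1) + t • xstar - x 0‖ := by
        intro t ht0 ht1
        apply hmin
        · exact hCcv hC1 hxsC (by linarith) ht0.le (by ring)
        · have : (1 - t) • x (n+1) + t • xstar - x n
              = (1 - t) • (x (n+1) - x n) + t • (xstar - x n) := by module
          rw [this, inner_add_left, real_inner_smul_left, real_inner_smul_left]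
          nlinarith [mul_nonpos_of_nonneg_of_nonpos (by linarith : (0:ℝ) ≤ 1 - t) hW1,
            mul_nonpos_of_nonneg_of_nonpos ht0.le ih]
        · have : (1 - t) • x (n+1) + t • xstar - x n
              = (1 - t) • (x (n+1) - x n) + t • (xstar - x n) := by module
          rw [this, inner_add_right, real_inner_smul_right, real_inner_smul_right]
          nlinarith [mul_nonpos_of_nonneg_of_nonpos (by linarith : (0:ℝ) ≤ 1 - t) hH1,
            mul_nonpos_of_nonneg_of_nonpos ht0.le hHs]
      -- derive variational inequality
      have hVI : ∀ t : ℝ, 0 < t → t ≤ 1 →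
          2 * ⟪xstar - x (n+1), x (n+1) - x 0⟫ ≥ - t * ‖xstar - x (n+1)‖ ^ 2 := by
        intro t ht0 ht1
        have h := hfeas t ht0 ht1
        have heq : (1 - t) • x (n+1) + t • xstar - x 0
            = (x (n+1) - x 0) + t • (xstar - x (n+1)) := by module
        rw [heq] at h
        have hsq : ‖x (n+1) - x 0‖ ^ 2 ≤ ‖(x (n+1) - x 0) + t • (xstar - x (n+1))‖ ^ 2 := by
          have := norm_nonneg (x (n+1) - x 0)
          nlinarith [h]
        rw [norm_add_sq_real, real_inner_smul_right, norm_smul, Real.norm_eq_abs,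
          abs_of_pos ht0, mul_pow] at hsq
        have hrw : ⟪x (n+1) - x 0, xstar - x (n+1)⟫ = ⟪xstar - x (n+1), x (n+1) - x 0⟫ :=
          real_inner_comm _ _
        rw [hrw] at hsq
        have h2 : 0 ≤ 2 * t * ⟪xstar - x (n+1), x (n+1) - x 0⟫
            + t ^ 2 * ‖xstar - x (n+1)‖ ^ 2 := by linarith
        nlinarith [h2, ht0, ht1, sq_nonneg (‖xstar - x (n+1)‖)]
      -- let t → 0
      have hc : ⟪xstar - x (n+1), x (n+1) - x 0⟫ ≥ 0 → True := fun _ => trivial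
      have hfinal : ⟪xstar - x (n+1), x 0 - x (n+1)⟫ ≤ 0 := by
        by_contra hcon
        push_neg at hcon
        set c := ⟪xstar - x (n+1), x 0 - x (n+1)⟫ with hcdef
        have hc' : ∀ t : ℝ, 0 < t → t ≤ 1 → 2 * c ≤ t * ‖xstar - x (n+1)‖ ^ 2 := by
          intro t ht0 ht1
          have := hVI t ht0 ht1
          have hflip : ⟪xstar - x (n+1), x (n+1) - x 0⟫ = -c := by
            rw [hcdef, ← inner_neg_right]; congr 1; abel
          rw [hflip] at this
          linarith
        set D := ‖xstar - x (n+1)‖ ^ 2 with hD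
        have hD0 : 0 ≤ D := sq_nonneg _
        rcases eq_or_lt_of_le hD0 with hDe | hDp
        · have := hc' 1 one_pos le_rfl
          rw [← hDe] at this; linarith
        · have ht := hc' (min 1 (c / D)) (lt_min one_pos (div_pos hcon hDp)) (min_le_left _ _)
          have : min 1 (c / D) * D ≤ (c / D) * D :=
            mul_le_mul_of_nonneg_right (min_le_right _ _) hD0
          rw [div_mul_cancel₀ _ (ne_of_gt hDp)] at this
          linarith
      exact hfinal
  -- conclude
  intro k
  have h := main k
  set u := x k - x 0 with hu
  set v := x k - xstar with hv
  have huv : ⟪u, v⟫ ≤ 0 := by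
    have e : ⟪xstar - x k, x 0 - x k⟫ = ⟪v, u⟫ := by
      rw [show xstar - x k = -v by rw [hv]; abel, show x 0 - x k = -u by rw [hu]; abel,
        inner_neg_neg]
    rw [e, real_inner_comm] at h
    exact h
  have e1 : x k - (2:ℝ)⁻¹ • (x 0 + xstar) = (2:ℝ)⁻¹ • (u + v) := by
    rw [hu, hv]; rw [smul_add, smul_add, smul_sub, smul_sub]
    rw [show ((2:ℝ)⁻¹ • x k - (2:ℝ)⁻¹ • x 0 + ((2:ℝ)⁻¹ • x k - (2:ℝ)⁻¹ • xstar) : H)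
      = ((2:ℝ)⁻¹ + (2:ℝ)⁻¹) • x k - ((2:ℝ)⁻¹ • x 0 + (2:ℝ)⁻¹ • xstar) by
        rw [add_smul]; abel]
    norm_num
  have e2 : xstar - x 0 = u - v := by rw [hu, hv]; abel
  rw [e1, e2, norm_smul, Real.norm_eq_abs]
  have hn1 : ‖u + v‖ ≤ ‖u - v‖ := by
    have h1 := norm_add_sq_real u v
    have h2 := norm_sub_sq_real u v
    have := norm_nonneg (u + v)
    have := norm_nonneg (u - v)
    nlinarith
  rw [abs_of_pos (by norm_num : (0:ℝ) < (2:ℝ)⁻¹)]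
  linarith [hn1]
end

section
/- Assume S_* ≠ ∅. Then the sequence (x^k)_{k∈ℕ} generated by Algorithm A2 satisfies lim_{k→∞} ‖x^{k+1} − x^k‖ = 0, and consequently lim_{k→∞} α_k ‖x^k − P_C(z^k)‖² = 0 whenever ∇f is bounded on bounded subsets of H. -/
open Filter
open scoped RealInnerProductSpace

lemma aux_grad_ineq
    {H : Type*} [NormedAddCommGroup H] [InnerProductSpace ℝ H]
    (f : H → ℝ) (hf : ConvexOn ℝ Set.univ f)
    (gradf : H → H)
    (hgrad : ∀ x d : H,
      Tendsto (fun t : ℝ => (f (x + t • d) - f x) / t) (nhdsWithin 0 (Set.Ioi 0))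
        (nhds ⟪gradf x, d⟫))
    (w v : H) : ⟪gradf w, v - w⟫ ≤ f v - f w := by
  refine le_of_tendsto (hgrad w (v - w)) ?_
  filter_upwards [Ioo_mem_nhdsGT_of_mem (Set.mem_Ico.mpr ⟨le_refl (0:ℝ), one_pos⟩)] with t ht
  have h1 : f (w + t • (v - w)) ≤ (1 - t) * f w + t * f v := by
    have h2 := hf.2 (Set.mem_univ w) (Set.mem_univ v)
      (by linarith [ht.2] : (0:ℝ) ≤ 1 - t) (le_of_lt ht.1) (by ring)
    have heq : (1 - t) • w + t • v = w + t • (v - w) := by module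
    rwa [heq] at h2
  rw [div_le_iff₀ ht.1]
  nlinarith [ht.1]

lemma aux_varineq
    {H : Type*} [NormedAddCommGroup H] [InnerProductSpace ℝ H]
    {K : Set H} (hK : Convex ℝ K) {p x0 : H} (hp : p ∈ K)
    (hmin : ∀ w ∈ K, ‖p - x0‖ ≤ ‖w - x0‖) {w : H} (hw : w ∈ K) :
    ⟪x0 - p, w - p⟫ ≤ 0 := by
  haveI : Nonempty K := ⟨⟨p, hp⟩⟩
  have heq : ‖x0 - p‖ = ⨅ q : K, ‖x0 - q‖ := by
    refine le_antisymm (le_ciInf fun q => ?_) (ciInf_le (f := fun q : K => ‖x0 - q‖) ⟨0, ?_⟩ ⟨p, hp⟩)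
    · rw [norm_sub_rev, norm_sub_rev x0 (q : H)]; exact hmin q q.2
    · rintro r ⟨q, rfl⟩; exact norm_nonneg _
  exact (norm_eq_iInf_iff_real_inner_le_zero hK hp).mp heq w hw

theorem stmt_13
    {H : Type*} [NormedAddCommGroup H] [InnerProductSpace ℝ H] [CompleteSpace H]
    (C : Set H) (hCne : C.Nonempty) (hCcl : IsClosed C) (hCcv : Convex ℝ C)
    (f : H → ℝ) (hf : ConvexOn ℝ Set.univ f)
    (gradf : H → H)
    (hgrad : ∀ x d : H,
      Tendsto (fun t : ℝ => (f (x + t • d) - f x) / t) (nhdsWithin 0 (Set.Ioi 0))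
        (nhds ⟪gradf x, d⟫))
    (PC : H → H)
    (hPC : ∀ x : H, PC x ∈ C ∧ ∀ z ∈ C, ⟪x - PC x, z - PC x⟫ ≤ 0)
    (θ δ βlo βhi : ℝ)
    (hθ : θ ∈ Set.Ioo (0:ℝ) 1) (hδ : δ ∈ Set.Ioo (0:ℝ) 1)
    (hβlo : 0 < βlo) (hββ : βlo ≤ βhi)
    (β : ℕ → ℝ) (hβk : ∀ k, β k ∈ Set.Icc βlo βhi)
    (x z : ℕ → H) (α : ℕ → ℝ) (j : ℕ → ℕ)
    (hx0 : x 0 ∈ C)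
    (hz : ∀ k, z k = x k - β k • gradf (x k))
    (hjA : ∀ k, f ((θ ^ j k) • PC (z k) + (1 - θ ^ j k) • x k)
        ≤ f (x k) - δ * θ ^ j k * ⟪gradf (x k), x k - PC (z k)⟫)
    (hjmin : ∀ k, ∀ i < j k, ¬ (f ((θ ^ i) • PC (z k) + (1 - θ ^ i) • x k)
        ≤ f (x k) - δ * θ ^ i * ⟪gradf (x k), x k - PC (z k)⟫))
    (hα : ∀ k, α k = θ ^ j k)
    (flev : ℕ → ℝ)
    (hflev0 : flev 0 = f ((θ ^ j 0) • PC (z 0) + (1 - θ ^ j 0) • x 0))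
    (hflevS : ∀ k, flev (k+1) =
        min (flev k) (f ((θ ^ j (k+1)) • PC (z (k+1)) + (1 - θ ^ j (k+1)) • x (k+1))))
    (hstep : ∀ k,
      (x (k+1) ∈ C ∧ ⟪x (k+1) - x k, x 0 - x k⟫ ≤ 0 ∧
        ⟪gradf (x k), x (k+1) - x k⟫ + f (x k) - flev k ≤ 0) ∧
      ∀ y : H, y ∈ C → ⟪y - x k, x 0 - x k⟫ ≤ 0 →
        ⟪gradf (x k), y - x k⟫ + f (x k) - flev k ≤ 0 →
        ‖x (k+1) - x 0‖ ≤ ‖y - x 0‖)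
    (hS : ∃ xs ∈ C, ∀ y ∈ C, f xs ≤ f y)
    : Tendsto (fun k => ‖x (k+1) - x k‖) atTop (nhds 0) ∧
      ((∀ B : Set H, Bornology.IsBounded B → ∃ M : ℝ, ∀ y ∈ B, ‖gradf y‖ ≤ M) →
        Tendsto (fun k => α k * ‖x k - PC (z k)‖ ^ 2) atTop (nhds 0)) := by
  obtain ⟨xs, hxsC, hxsmin⟩ := hS
  obtain ⟨hθ0, hθ1⟩ := hθ
  obtain ⟨hδ0, hδ1⟩ := hδ
  have hgi : ∀ w v : H, ⟪gradf w, v - w⟫ ≤ f v - f w :=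
    aux_grad_ineq f hf gradf hgrad
  have hxC : ∀ k, x k ∈ C := by
    intro k
    induction k with
    | zero => exact hx0
    | succ n _ => exact (hstep n).1.1
  have hθpow : ∀ m : ℕ, 0 < θ ^ m ∧ θ ^ m ≤ 1 :=
    fun m => ⟨pow_pos hθ0 m, pow_le_one₀ hθ0.le hθ1.le⟩
  have hyC : ∀ k, (θ ^ j k) • PC (z k) + (1 - θ ^ j k) • x k ∈ C := fun k =>
    hCcv (hPC (z k)).1 (hxC k) (hθpow (j k)).1.le (by linarith [(hθpow (j k)).2]) (by ring)
  have hflev_le : ∀ k, flev k ≤ f ((θ ^ j k) • PC (z k) + (1 - θ ^ j k) • x k) := by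
    intro k
    cases k with
    | zero => exact le_of_eq hflev0
    | succ n => rw [hflevS n]; exact min_le_right _ _
  have hflev_ge : ∀ k, f xs ≤ flev k := by
    intro k
    induction k with
    | zero => rw [hflev0]; exact hxsmin _ (hyC 0)
    | succ n ih => rw [hflevS n]; exact le_min ih (hxsmin _ (hyC (n + 1)))
  have hxsHk : ∀ k, ⟪gradf (x k), xs - x k⟫ + f (x k) - flev k ≤ 0 := by
    intro k
    have h1 := hgi (x k) xs
    have h2 := hflev_ge k
    linarith
  have hW : ∀ k, ⟪xs - x k, x 0 - x k⟫ ≤ 0 := by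
    intro k
    induction k with
    | zero => simp
    | succ n ih =>
      set K : Set H := {w | w ∈ C ∧ ⟪w - x n, x 0 - x n⟫ ≤ 0 ∧
        ⟪gradf (x n), w - x n⟫ + f (x n) - flev n ≤ 0} with hKdef
      have hKcv : Convex ℝ K := by
        rintro u ⟨huC, huW, huH⟩ v ⟨hvC, hvW, hvH⟩ a b ha hb hab
        have hcomb : a • u + b • v - x n = a • (u - x n) + b • (v - x n) := by
          calc a • u + b • v - x n = a • u + b • v - (a + b) • x n := by rw [hab, one_smul]
            _ = a • (u - x n) + b • (v - x n) := by module
        refine ⟨hCcv huC hvC ha hb hab, ?_, ?_⟩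
        · show ⟪a • u + b • v - x n, x 0 - x n⟫ ≤ 0
          rw [hcomb, inner_add_left, real_inner_smul_left, real_inner_smul_left]
          nlinarith
        · show ⟪gradf (x n), a • u + b • v - x n⟫ + f (x n) - flev n ≤ 0
          rw [hcomb, inner_add_right, real_inner_smul_right, real_inner_smul_right]
          have h1 := mul_le_mul_of_nonneg_left huH ha
          have h2 := mul_le_mul_of_nonneg_left hvH hb
          have hfl : f (x n) - flev n = a * (f (x n) - flev n) + b * (f (x n) - flev n) := by
            rw [← add_mul, hab, one_mul]
          nlinarith [h1, h2, hfl]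
      have hpK : x (n + 1) ∈ K := ⟨(hstep n).1.1, (hstep n).1.2.1, (hstep n).1.2.2⟩
      have hminK : ∀ w ∈ K, ‖x (n + 1) - x 0‖ ≤ ‖w - x 0‖ :=
        fun w hw => (hstep n).2 w hw.1 hw.2.1 hw.2.2
      have hxsK : xs ∈ K := ⟨hxsC, ih, hxsHk n⟩
      have := aux_varineq hKcv hpK hminK hxsK
      rwa [real_inner_comm] at this
  have hbound : ∀ k, ‖x k - x 0‖ ≤ ‖xs - x 0‖ := by
    intro k
    cases k with
    | zero => simp [norm_nonneg]
    | succ n => exact (hstep n).2 xs hxsC (hW n) (hxsHk n)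
  set s : ℕ → ℝ := fun k => ‖x k - x 0‖ ^ 2 with hsdef
  have hmonostep : ∀ k, s k + ‖x (k + 1) - x k‖ ^ 2 ≤ s (k + 1) := by
    intro k
    have hexp : x (k + 1) - x 0 = (x (k + 1) - x k) + (x k - x 0) := by abel
    have hin : ⟪x (k + 1) - x k, x k - x 0⟫ = -⟪x (k + 1) - x k, x 0 - x k⟫ := by
      rw [show x k - x 0 = -(x 0 - x k) by abel, inner_neg_right]
    have hs1 : s (k + 1) = ‖x (k + 1) - x k‖ ^ 2 + 2 * ⟪x (k + 1) - x k, x k - x 0⟫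
        + ‖x k - x 0‖ ^ 2 := by
      rw [hsdef]; simp only []; rw [hexp, norm_add_sq_real]
    have hw := (hstep k).1.2.1
    rw [hs1, hin]
    simp only [hsdef]
    linarith
  have hsmono : Monotone s :=
    monotone_nat_of_le_succ fun k => by nlinarith [hmonostep k, sq_nonneg ‖x (k + 1) - x k‖]
  have hsbdd : BddAbove (Set.range s) := by
    refine ⟨‖xs - x 0‖ ^ 2, ?_⟩
    rintro r ⟨k, rfl⟩
    exact pow_le_pow_left₀ (norm_nonneg _) (hbound k) 2
  set L : ℝ := ⨆ k, s k with hLdef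
  have hsL : Tendsto s atTop (nhds L) := tendsto_atTop_ciSup hsmono hsbdd
  have hsL' : Tendsto (fun k => s (k + 1)) atTop (nhds L) :=
    hsL.comp (tendsto_add_atTop_nat 1)
  have hdiff : Tendsto (fun k => s (k + 1) - s k) atTop (nhds 0) := by
    have := hsL'.sub hsL
    simpa using this
  have hd2 : Tendsto (fun k => ‖x (k + 1) - x k‖ ^ 2) atTop (nhds 0) :=
    squeeze_zero (fun k => sq_nonneg _) (fun k => by linarith [hmonostep k]) hdiff
  have part1 : Tendsto (fun k => ‖x (k + 1) - x k‖) atTop (nhds 0) := by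
    have h1 : (fun k => ‖x (k + 1) - x k‖) = fun k => Real.sqrt (‖x (k + 1) - x k‖ ^ 2) :=
      funext fun k => (Real.sqrt_sq (norm_nonneg _)).symm
    rw [h1]
    simpa using hd2.sqrt
  refine ⟨part1, ?_⟩
  intro hB
  obtain ⟨M, hM⟩ := hB (Metric.closedBall (x 0) ‖xs - x 0‖) Metric.isBounded_closedBall
  have hxball : ∀ k, x k ∈ Metric.closedBall (x 0) ‖xs - x 0‖ := fun k => by
    rw [Metric.mem_closedBall, dist_eq_norm]; exact hbound k
  have hMd : ∀ k, ‖gradf (x k)‖ ≤ M := fun k => hM _ (hxball k)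
  have hkey : ∀ k, α k * ‖x k - PC (z k)‖ ^ 2 ≤ (βhi * M / δ) * ‖x (k + 1) - x k‖ := by
    intro k
    have hβ1 := (hβk k).1
    have hβ2 := (hβk k).2
    have hα0 : 0 < α k := by rw [hα k]; exact (hθpow (j k)).1
    have hproj := (hPC (z k)).2 (x k) (hxC k)
    nth_rewrite 1 [hz k] at hproj
    rw [sub_right_comm, inner_sub_left, real_inner_smul_left,
      real_inner_self_eq_norm_sq] at hproj
    have h1 : ‖x k - PC (z k)‖ ^ 2 ≤ β k * ⟪gradf (x k), x k - PC (z k)⟫ := by linarith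
    have h2 : 0 ≤ ⟪gradf (x k), x k - PC (z k)⟫ := by
      nlinarith [sq_nonneg ‖x k - PC (z k)‖]
    have h3 : δ * (α k * ⟪gradf (x k), x k - PC (z k)⟫) ≤ f (x k) - flev k := by
      have hA := hjA k
      have hle := hflev_le k
      rw [hα k]
      linarith
    have h4 : f (x k) - flev k ≤ ‖gradf (x k)‖ * ‖x (k + 1) - x k‖ := by
      have hs3 := (hstep k).1.2.2
      have habs := abs_real_inner_le_norm (gradf (x k)) (x (k + 1) - x k)
      have hneg : -⟪gradf (x k), x (k + 1) - x k⟫ ≤ ‖gradf (x k)‖ * ‖x (k + 1) - x k‖ :=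
        (neg_le_abs _).trans habs
      linarith
    have hd0 : (0:ℝ) ≤ ‖x (k + 1) - x k‖ := norm_nonneg _
    have hgM := hMd k
    have h5 : f (x k) - flev k ≤ M * ‖x (k + 1) - x k‖ :=
      le_trans h4 (mul_le_mul_of_nonneg_right hgM hd0)
    have h6 : α k * ⟪gradf (x k), x k - PC (z k)⟫ ≤ M * ‖x (k + 1) - x k‖ / δ := by
      rw [le_div_iff₀ hδ0]
      nlinarith
    have hβhi0 : (0:ℝ) ≤ βhi := le_trans hβlo.le (le_trans hβ1 hβ2)
    calc α k * ‖x k - PC (z k)‖ ^ 2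
        ≤ α k * (β k * ⟪gradf (x k), x k - PC (z k)⟫) :=
          mul_le_mul_of_nonneg_left h1 hα0.le
      _ ≤ βhi * (α k * ⟪gradf (x k), x k - PC (z k)⟫) := by
          nlinarith [mul_nonneg hα0.le h2]
      _ ≤ βhi * (M * ‖x (k + 1) - x k‖ / δ) := mul_le_mul_of_nonneg_left h6 hβhi0
      _ = (βhi * M / δ) * ‖x (k + 1) - x k‖ := by ring
  have hnn : ∀ k, 0 ≤ α k * ‖x k - PC (z k)‖ ^ 2 := fun k =>
    mul_nonneg (by rw [hα k]; exact (hθpow (j k)).1.le) (sq_nonneg _)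
  have htb : Tendsto (fun k => (βhi * M / δ) * ‖x (k + 1) - x k‖) atTop (nhds 0) := by
    simpa using part1.const_mul (βhi * M / δ)
  exact squeeze_zero hnn hkey htb
end
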